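/- arXiv:1109.5582 — 2 statements merged into one kernel-verified Lean document; each statement's English description precedes it below -/
import Mathlib

section
/- Suppose weights w : {finite subsets of ℕ} → ℂ satisfy the strengthened Kotecky–Preiss criterion ∑_{A : A ∼ A'} e^{δ|A|} d(A)^α |w(A)| ≤ δ |A'| for all finite A' ⊂ ℕ, where d(A) = 1 + max A − min A, α > 0, A ∼ A' means dist(A,A') ≤ 1, and every A with w(A) ≠ 0 has d(A) > 1. Then the truncated (cluster) weights w^T satisfy the decay estimate: for every finite A₀ ⊂ ℕ and every m ≥ 0, ∑_{clusters 𝒜 with 𝒜 ∼ A₀ and d(𝒜) ≥ m} |w^T(𝒜)| ≤ C δ |A₀| (1+m)^{−α}. -/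
open scoped BigOperators ENNReal
attribute [local instance] Classical.propDecidable

noncomputable section

/-- Two finite subsets of `ℕ` are adjacent iff their distance is at most `1`. -/
def adjP (A B : Finset ℕ) : Prop := ∃ a ∈ A, ∃ b ∈ B, a ≤ b + 1 ∧ b ≤ a + 1

/-- The diameter `d(A) = 1 + max A − min A` of a finite subset of `ℕ`. -/
def diamP (A : Finset ℕ) : ℕ := 1 + WithBot.unbotD 0 (A.max) - WithTop.untopD 0 (A.min)

/-- A collection of polymers is a cluster: its adjacency graph is connected. -/
def clusterConn (𝒜 : Finset (Finset ℕ)) : Prop :=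
  ∀ A ∈ 𝒜, ∀ B ∈ 𝒜, Relation.ReflTransGen (fun X Y => X ∈ 𝒜 ∧ Y ∈ 𝒜 ∧ adjP X Y) A B

/-- The graph on vertex set `V` with edge set `E` is connected. -/
def connectedOn (V : Finset (Finset ℕ)) (E : Finset (Sym2 (Finset ℕ))) : Prop :=
  ∀ x ∈ V, ∀ y ∈ V, Relation.ReflTransGen (fun u v => s(u, v) ∈ E) x y

/-- The truncated (cluster) weight
`w^T(𝒜) = ∑_{connected graphs G on 𝒜} (−1)^{|E(G)|} ∏_{{A,A'} ∈ E(G)} 1[A ∼ A'] ∏_{A ∈ 𝒜} w(A)`. -/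
def truncWeight (w : Finset ℕ → ℂ) (𝒜 : Finset (Finset ℕ)) : ℂ :=
  ∑ E ∈ ((𝒜.sym2.filter fun e => ¬ e.IsDiag).powerset.filter fun E => connectedOn 𝒜 E),
    (-1 : ℂ) ^ E.card
      * (∏ e ∈ E, if ∀ X Y : Finset ℕ, e = s(X, Y) → adjP X Y then (1 : ℂ) else 0)
      * ∏ A ∈ 𝒜, w A


def enc (A : Finset ℕ) : ℕ := Encodable.encode A

lemma enc_inj : Function.Injective enc := Encodable.encode_injective

noncomputable def pick (s : Finset (Finset ℕ)) : Finset ℕ :=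
  if h : s.Nonempty then (Finset.exists_min_image s enc h).choose else ∅

lemma pick_mem {s : Finset (Finset ℕ)} (h : s.Nonempty) : pick s ∈ s := by
  rw [pick, dif_pos h]
  exact (Finset.exists_min_image s enc h).choose_spec.1

lemma pick_min {s : Finset (Finset ℕ)} (h : s.Nonempty) : ∀ u ∈ s, enc (pick s) ≤ enc u := by
  rw [pick, dif_pos h]
  exact (Finset.exists_min_image s enc h).choose_spec.2

lemma pick_eq {s : Finset (Finset ℕ)} {u : Finset ℕ} (hu : u ∈ s)
    (hmin : ∀ u' ∈ s, enc u ≤ enc u') : pick s = u := by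
  have hne : s.Nonempty := ⟨u, hu⟩
  exact enc_inj (le_antisymm (pick_min hne u hu) (hmin _ (pick_mem hne)))

/-- finite sum over an injectively mapped finset is at most a tsum. -/
lemma sum_le_tsum_of_inj {β γ : Type*} (s : Finset β) (h : β → γ)
    (hinj : ∀ b1 ∈ s, ∀ b2 ∈ s, h b1 = h b2 → b1 = b2) (F : γ → ℝ≥0∞) :
    (∑ b ∈ s, F (h b)) ≤ ∑' c, F c := by
  rw [← Finset.sum_image (f := F) (g := h) hinj]
  exact ENNReal.sum_le_tsum _

/-- fiberwise comparison of tsums. -/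
lemma tsum_le_tsum_fiber {I X : Type*} (f : I → ℝ≥0∞) (F : X → ℝ≥0∞) (dec : X → I)
    (h : ∀ i, f i ≤ ∑' x : {x // dec x = i}, F x.1) :
    ∑' i, f i ≤ ∑' x, F x := by
  calc ∑' i, f i ≤ ∑' i, ∑' x : {x // dec x = i}, F x.1 := ENNReal.tsum_le_tsum h
  _ = ∑' p : Σ i : I, {x // dec x = i}, F p.2.1 :=
      (ENNReal.tsum_sigma' (f := fun p : Σ i : I, {x // dec x = i} => F p.2.1)).symm
  _ = ∑' x, F x := (Equiv.sigmaFiberEquiv dec).tsum_eq F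

def expE (x : ℝ≥0∞) : ℝ≥0∞ := ∑' k : ℕ, x ^ k * ((Nat.factorial k : ℝ≥0∞))⁻¹

lemma expE_mono {x y : ℝ≥0∞} (h : x ≤ y) : expE x ≤ expE y :=
  ENNReal.tsum_le_tsum fun k => mul_le_mul_left (pow_le_pow_left' h k) _

lemma expE_ofReal (t : ℝ) (ht : 0 ≤ t) : expE (ENNReal.ofReal t) = ENNReal.ofReal (Real.exp t) := by
  have h1 : ∀ k : ℕ, (ENNReal.ofReal t) ^ k * ((Nat.factorial k : ℝ≥0∞))⁻¹
      = ENNReal.ofReal (t ^ k / Nat.factorial k) := by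
    intro k
    rw [← ENNReal.ofReal_pow ht, div_eq_mul_inv, ENNReal.ofReal_mul (pow_nonneg ht k)]
    congr 1
    rw [← ENNReal.ofReal_natCast (Nat.factorial k),
      ← ENNReal.ofReal_inv_of_pos (by positivity)]
  rw [expE]
  simp_rw [h1]
  rw [← ENNReal.ofReal_tsum_of_nonneg (fun k => by positivity) (Real.summable_pow_div_factorial t)]
  congr 1
  rw [Real.exp_eq_exp_ℝ, NormedSpace.exp_eq_tsum_div]

lemma tsum_pow {I : Type*} (f : I → ℝ≥0∞) (k : ℕ) :
    (∑' i, f i) ^ k = ∑' g : Fin k → I, ∏ i, f (g i) := by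
  induction k with
  | zero =>
    simp only [pow_zero]
    rw [tsum_eq_single (fun i => i.elim0)]
    · simp
    · intro g hg; exact absurd (funext fun i => i.elim0) hg
  | succ k ih =>
    rw [pow_succ']
    rw [← (Fin.consEquiv (fun _ : Fin (k+1) => I)).tsum_eq (fun g => ∏ i, f (g i))]
    have : ∀ p : I × (Fin k → I),
        (∏ i, f ((Fin.consEquiv (fun _ : Fin (k+1) => I)) p i)) = f p.1 * ∏ i, f (p.2 i) := by
      intro p
      rw [Fin.prod_univ_succ]
      simp [Fin.consEquiv]
    simp_rw [this]
    rw [ENNReal.tsum_prod']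
    simp_rw [ENNReal.tsum_mul_left, ENNReal.tsum_mul_right, ih]

section Walks
variable {V : Type*}

/-- walks of given length along a relation -/
def RW (R : V → V → Prop) : ℕ → V → V → Prop
  | 0 => fun a b => a = b
  | (n+1) => fun a c => ∃ b, R a b ∧ RW R n b c

lemma RW_zero {R : V → V → Prop} {a b : V} (h : RW R 0 a b) : a = b := h

lemma RW_trans {R : V → V → Prop} : ∀ {m n : ℕ} {a b c : V},
    RW R m a b → RW R n b c → RW R (m + n) a c := by
  intro m
  induction m with
  | zero => intro n a b c h1 h2; rw [RW_zero h1]; simpa using h2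
  | succ m ih =>
    intro n a b c h1 h2
    obtain ⟨d, hd, hw⟩ := h1
    have he : m + 1 + n = (m + n) + 1 := by omega
    rw [he]
    exact ⟨d, hd, ih hw h2⟩

lemma RW_single {R : V → V → Prop} {a b : V} (h : R a b) : RW R 1 a b := ⟨b, h, rfl⟩

lemma rtg_iff_RW {R : V → V → Prop} {a b : V} :
    Relation.ReflTransGen R a b ↔ ∃ n, RW R n a b := by
  constructor
  · intro h
    induction h with
    | refl => exact ⟨0, rfl⟩
    | tail _ hR ih => obtain ⟨n, hn⟩ := ih; exact ⟨n + 1, RW_trans hn (RW_single hR)⟩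
  · rintro ⟨n, hn⟩
    induction n generalizing a with
    | zero => rw [RW_zero hn]
    | succ n ih =>
      obtain ⟨c, hc, hw⟩ := hn
      exact Relation.ReflTransGen.head hc (ih hw)

lemma rtg_symm {R : V → V → Prop} (hs : ∀ x y, R x y → R y x) {a b : V}
    (h : Relation.ReflTransGen R a b) : Relation.ReflTransGen R b a := by
  induction h with
  | refl => exact .refl
  | tail _ hR ih => exact Relation.ReflTransGen.head (hs _ _ hR) ih

lemma RW_mono {R R' : V → V → Prop} (h : ∀ x y, R x y → R' x y) :
    ∀ {n : ℕ} {a b : V}, RW R n a b → RW R' n a b := by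
  intro n
  induction n with
  | zero => intro a b hw; exact hw
  | succ n ih => rintro a b ⟨c, hc, hw⟩; exact ⟨c, h _ _ hc, ih hw⟩

lemma RW_succ_last {R : V → V → Prop} : ∀ {m : ℕ} {a b : V},
    RW R (m + 1) a b ↔ ∃ u, RW R m a u ∧ R u b := by
  intro m
  induction m with
  | zero =>
    intro a b
    constructor
    · rintro ⟨c, hc, hw⟩; exact ⟨a, rfl, by rw [RW_zero hw] at hc; exact hc⟩
    · rintro ⟨u, hu, hR⟩; exact ⟨b, by rw [RW_zero hu]; exact hR, rfl⟩
  | succ m ih =>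
    intro a b
    constructor
    · rintro ⟨c, hc, hw⟩
      obtain ⟨u, hu, hR⟩ := ih.1 hw
      exact ⟨u, ⟨c, hc, hu⟩, hR⟩
    · rintro ⟨u, ⟨c, hc, hw⟩, hR⟩
      exact ⟨c, hc, ih.2 ⟨u, hw, hR⟩⟩

/-- distance along a relation, junk value 0 if unreachable -/
noncomputable def distR (R : V → V → Prop) (a b : V) : ℕ :=
  if h : ∃ n, RW R n a b then Nat.find h else 0

lemma distR_spec {R : V → V → Prop} {a b : V} (h : ∃ n, RW R n a b) :
    RW R (distR R a b) a b := by
  rw [distR, dif_pos h]; exact Nat.find_spec h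

lemma distR_le {R : V → V → Prop} {a b : V} {n : ℕ} (hn : RW R n a b) :
    distR R a b ≤ n := by
  rw [distR, dif_pos ⟨n, hn⟩]; exact Nat.find_min' _ hn

lemma distR_self {R : V → V → Prop} (a : V) : distR R a a = 0 :=
  Nat.le_zero.1 (distR_le (by rfl : RW R 0 a a))

lemma distR_eq_zero {R : V → V → Prop} {a b : V} (h : ∃ n, RW R n a b)
    (h0 : distR R a b = 0) : a = b := by
  have := distR_spec h; rw [h0] at this; exact RW_zero this

lemma distR_step {R : V → V → Prop} {a b c : V} (h : ∃ n, RW R n a b) (hR : R b c) :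
    distR R a c ≤ distR R a b + 1 :=
  distR_le (RW_trans (distR_spec h) (RW_single hR))

/-- "level" lemma: if `ℓ` grows by at most 1 along edges, it is bounded by walk length. -/
lemma level_le_of_RW {R : V → V → Prop} (ℓ : V → ℕ)
    (hedge : ∀ x y, R x y → ℓ y ≤ ℓ x + 1) :
    ∀ {n : ℕ} {a b : V}, RW R n a b → ℓ b ≤ ℓ a + n := by
  intro n
  induction n with
  | zero => intro a b h; rw [RW_zero h]; omega
  | succ n ih =>
    rintro a b ⟨c, hc, hw⟩
    have := ih hw
    have := hedge _ _ hc
    omega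

/-- penultimate vertex on a geodesic -/
lemma exists_penult {R : V → V → Prop} {r v : V} (h : ∃ n, RW R n r v)
    (hne : distR R r v ≠ 0) :
    ∃ u, R u v ∧ (∃ m, RW R m r u) ∧ distR R r u + 1 = distR R r v := by
  obtain ⟨m, hm⟩ : ∃ m, distR R r v = m + 1 := ⟨distR R r v - 1, by omega⟩
  have hs := distR_spec h
  rw [hm] at hs
  obtain ⟨u, hu, hR⟩ := RW_succ_last.1 hs
  refine ⟨u, hR, ⟨m, hu⟩, ?_⟩
  have h1 : distR R r u ≤ m := distR_le hu
  have h2 : distR R r v ≤ distR R r u + 1 :=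
    distR_le (RW_trans (distR_spec ⟨m, hu⟩) (RW_single hR))
  omega

/-- in a functional relation, the successor is unique, so distances add along a step -/
lemma distR_succ_of_functional {R : V → V → Prop}
    (hfun : ∀ a b c, R a b → R a c → b = c) {v u r : V}
    (hvu : R v u) (hvr : v ≠ r) (hreach : ∃ n, RW R n v r) :
    distR R v r = distR R u r + 1 := by
  have hd0 : distR R v r ≠ 0 := fun h0 => hvr (distR_eq_zero hreach h0)
  have hspec := distR_spec hreach
  obtain ⟨m, hm⟩ : ∃ m, distR R v r = m + 1 := ⟨distR R v r - 1, by omega⟩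
  rw [hm] at hspec
  obtain ⟨b, hb, hw⟩ := hspec
  have hbu : b = u := hfun _ _ _ hb hvu
  rw [hbu] at hw
  have h1 : distR R u r ≤ m := distR_le hw
  have h2 : distR R v r ≤ distR R u r + 1 := by
    have := RW_trans (RW_single hvu) (distR_spec ⟨m, hw⟩)
    exact distR_le (by simpa [Nat.add_comm] using this)
  omega

/-- in a functional relation walks are unique: parallel walks from the same point nest. -/
lemma RW_functional_nest {R : V → V → Prop}
    (hfun : ∀ a b c, R a b → R a c → b = c) :
    ∀ {a : ℕ} {b : ℕ} {v x y : V}, a ≤ b → RW R a v x → RW R b v y → RW R (b - a) x y := by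
  intro a
  induction a with
  | zero => intro b v x y _ h1 h2; rw [← RW_zero h1]; simpa using h2
  | succ a ih =>
    rintro b v x y hab ⟨c, hc, hw⟩ h2
    obtain ⟨b', rfl⟩ : ∃ b', b = b' + 1 := ⟨b - 1, by omega⟩
    obtain ⟨c', hc', hw'⟩ := h2
    have : c' = c := hfun _ _ _ hc' hc
    subst this
    have := ih (by omega : a ≤ b') hw hw'
    simpa [Nat.succ_sub_succ] using this

end Walks

-- ## Rooted trees encoded by parent relations

/-- vertex set of a rooted tree given by a set of (child, parent) pairs -/
def VT (r : Finset ℕ) (P : Finset (Finset ℕ × Finset ℕ)) : Finset (Finset ℕ) :=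
  insert r (P.image Prod.fst)

/-- parent relation -/
def Rp (P : Finset (Finset ℕ × Finset ℕ)) : Finset ℕ → Finset ℕ → Prop :=
  fun x y => (x, y) ∈ P

/-- `(r, P)` is a rooted tree with vertices adjacent polymers -/
def RT (r : Finset ℕ) (P : Finset (Finset ℕ × Finset ℕ)) : Prop :=
  (∀ q ∈ P, q.2 ∈ VT r P) ∧ (∀ q ∈ P, q.1 ≠ r) ∧
  (∀ q ∈ P, ∀ q' ∈ P, q.1 = q'.1 → q.2 = q'.2) ∧
  (∀ q ∈ P, adjP q.1 q.2) ∧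
  (∀ v ∈ VT r P, Relation.ReflTransGen (Rp P) v r)

noncomputable def parOf (P : Finset (Finset ℕ × Finset ℕ)) (v : Finset ℕ) : Finset ℕ :=
  pick ((P.filter (fun q => q.1 = v)).image Prod.snd)

lemma parOf_eq {P : Finset (Finset ℕ × Finset ℕ)} {v u : Finset ℕ}
    (h3 : ∀ q ∈ P, ∀ q' ∈ P, q.1 = q'.1 → q.2 = q'.2) (hq : (v, u) ∈ P) :
    parOf P v = u := by
  apply pick_eq
  · exact Finset.mem_image.2 ⟨(v, u), Finset.mem_filter.2 ⟨hq, rfl⟩, rfl⟩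
  · intro u' hu'
    obtain ⟨q, hq', rfl⟩ := Finset.mem_image.1 hu'
    have hf := Finset.mem_filter.1 hq'
    have h := h3 (v, u) hq q hf.1 hf.2.symm
    exact le_of_eq (congrArg enc h)

lemma mem_parOf {P : Finset (Finset ℕ × Finset ℕ)} {v u : Finset ℕ}
    (h3 : ∀ q ∈ P, ∀ q' ∈ P, q.1 = q'.1 → q.2 = q'.2) (hq : (v, u) ∈ P) :
    (v, parOf P v) ∈ P := by rw [parOf_eq h3 hq]; exact hq

lemma fst_mem_VT {r : Finset ℕ} {P : Finset (Finset ℕ × Finset ℕ)} {q : Finset ℕ × Finset ℕ}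
    (hq : q ∈ P) : q.1 ∈ VT r P :=
  Finset.mem_insert.2 (Or.inr (Finset.mem_image.2 ⟨q, hq, rfl⟩))

lemma mem_VT_pair {r : Finset ℕ} {P : Finset (Finset ℕ × Finset ℕ)} {v : Finset ℕ}
    (hv : v ∈ VT r P) (hvr : v ≠ r) : ∃ u, (v, u) ∈ P := by
  rcases Finset.mem_insert.1 hv with h | h
  · exact absurd h hvr
  · obtain ⟨q, hq, rfl⟩ := Finset.mem_image.1 h
    exact ⟨q.2, hq⟩

section RTfacts
variable {r : Finset ℕ} {P : Finset (Finset ℕ × Finset ℕ)} (hRT : RT r P)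

lemma RT_fun (hRT : RT r P) : ∀ a b c : Finset ℕ, Rp P a b → Rp P a c → b = c :=
  fun a b c h h' => hRT.2.2.1 (a, b) h (a, c) h' rfl

lemma RT_reach (hRT : RT r P) {v : Finset ℕ} (hv : v ∈ VT r P) : ∃ n, RW (Rp P) n v r :=
  rtg_iff_RW.1 (hRT.2.2.2.2 v hv)

/-- depth of a vertex -/
noncomputable def dep (r : Finset ℕ) (P : Finset (Finset ℕ × Finset ℕ)) (v : Finset ℕ) : ℕ :=
  distR (Rp P) v r

lemma dep_root : dep r P r = 0 := distR_self r

lemma dep_succ (hRT : RT r P) {v : Finset ℕ} (hv : v ∈ VT r P) (hvr : v ≠ r) :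
    dep r P v = dep r P (parOf P v) + 1 := by
  obtain ⟨u, hq⟩ := mem_VT_pair hv hvr
  rw [parOf_eq hRT.2.2.1 hq]
  exact distR_succ_of_functional (RT_fun hRT) hq hvr (RT_reach hRT hv)

lemma parOf_mem_VT (hRT : RT r P) {v : Finset ℕ} (hv : v ∈ VT r P) (hvr : v ≠ r) :
    parOf P v ∈ VT r P := by
  obtain ⟨u, hq⟩ := mem_VT_pair hv hvr
  exact hRT.1 _ (mem_parOf hRT.2.2.1 hq)

lemma parOf_pair_mem (hRT : RT r P) {v : Finset ℕ} (hv : v ∈ VT r P) (hvr : v ≠ r) :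
    (v, parOf P v) ∈ P := by
  obtain ⟨u, hq⟩ := mem_VT_pair hv hvr
  exact mem_parOf hRT.2.2.1 hq

/-- children of the root -/
def childs (r : Finset ℕ) (P : Finset (Finset ℕ × Finset ℕ)) : Finset (Finset ℕ) :=
  (P.filter (fun q => q.2 = r)).image Prod.fst

/-- subtree vertex set below child c -/
def subV (r : Finset ℕ) (P : Finset (Finset ℕ × Finset ℕ)) (c : Finset ℕ) :
    Finset (Finset ℕ) :=
  (VT r P).filter (fun v => ∃ n, RW (Rp P) n v c)

/-- subtree parent pairs below child c -/
def subP (r : Finset ℕ) (P : Finset (Finset ℕ × Finset ℕ)) (c : Finset ℕ) :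
    Finset (Finset ℕ × Finset ℕ) :=
  P.filter (fun q => q.1 ∈ subV r P c ∧ q.1 ≠ c)

lemma childs_pair {c : Finset ℕ} (hc : c ∈ childs r P) : (c, r) ∈ P := by
  obtain ⟨q, hq, rfl⟩ := Finset.mem_image.1 hc
  have h := Finset.mem_filter.1 hq
  have : q = (q.1, r) := by rw [← h.2]
  rw [this] at h
  exact h.1

lemma childs_ne_root (hRT : RT r P) {c : Finset ℕ} (hc : c ∈ childs r P) : c ≠ r :=
  hRT.2.1 _ (childs_pair hc)

lemma childs_mem_VT {c : Finset ℕ} (hc : c ∈ childs r P) : c ∈ VT r P :=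
  fst_mem_VT (childs_pair hc)

lemma root_not_mem_subV (hRT : RT r P) {c : Finset ℕ} (hc : c ∈ childs r P) :
    r ∉ subV r P c := by
  intro h
  obtain ⟨n, hn⟩ := (Finset.mem_filter.1 h).2
  cases n with
  | zero => exact childs_ne_root hRT hc (RW_zero hn).symm
  | succ n =>
    obtain ⟨b, hb, _⟩ := hn
    exact hRT.2.1 (r, b) hb rfl

lemma mem_subV_iff {c v : Finset ℕ} :
    v ∈ subV r P c ↔ v ∈ VT r P ∧ ∃ n, RW (Rp P) n v c := Finset.mem_filter

lemma subV_step (hRT : RT r P) {c v b : Finset ℕ} (hv : v ∈ subV r P c) (hvc : v ≠ c)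
    (hb : (v, b) ∈ P) : b ∈ subV r P c ∧ ∃ m, RW (Rp P) m b c := by
  obtain ⟨hvV, n, hn⟩ := mem_subV_iff.1 hv
  cases n with
  | zero => exact absurd (RW_zero hn) hvc
  | succ n =>
    obtain ⟨b', hb', hw⟩ := hn
    have : b' = b := RT_fun hRT _ _ _ hb' hb
    rw [this] at hw
    exact ⟨mem_subV_iff.2 ⟨hRT.1 _ hb, n, hw⟩, n, hw⟩

lemma VT_subP (hRT : RT r P) {c : Finset ℕ} (hc : c ∈ childs r P) :
    VT c (subP r P c) = subV r P c := by
  apply Finset.ext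
  intro v
  constructor
  · intro hv
    rcases Finset.mem_insert.1 hv with h | h
    · rw [h]; exact mem_subV_iff.2 ⟨childs_mem_VT hc, 0, rfl⟩
    · obtain ⟨q, hq, rfl⟩ := Finset.mem_image.1 h
      exact (Finset.mem_filter.1 hq).2.1
  · intro hv
    by_cases hvc : v = c
    · rw [hvc]; exact Finset.mem_insert_self _ _
    · have hvr : v ≠ r := by
        intro h; rw [h] at hv; exact root_not_mem_subV hRT hc hv
      obtain ⟨u, hq⟩ := mem_VT_pair (mem_subV_iff.1 hv).1 hvr
      exact Finset.mem_insert.2 (Or.inr (Finset.mem_image.2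
        ⟨(v, u), Finset.mem_filter.2 ⟨hq, hv, hvc⟩, rfl⟩))

lemma RT_subP (hRT : RT r P) {c : Finset ℕ} (hc : c ∈ childs r P) :
    RT c (subP r P c) := by
  refine ⟨?_, ?_, ?_, ?_, ?_⟩
  · intro q hq
    have h := Finset.mem_filter.1 hq
    rw [VT_subP hRT hc]
    have : q = (q.1, q.2) := rfl
    exact (subV_step hRT h.2.1 h.2.2 (by rw [← this]; exact h.1)).1
  · intro q hq; exact (Finset.mem_filter.1 hq).2.2
  · intro q hq q' hq'
    exact hRT.2.2.1 q (Finset.mem_filter.1 hq).1 q' (Finset.mem_filter.1 hq').1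
  · intro q hq; exact hRT.2.2.2.1 q (Finset.mem_filter.1 hq).1
  · intro v hv
    rw [VT_subP hRT hc] at hv
    obtain ⟨hvV, n, hn⟩ := mem_subV_iff.1 hv
    clear hv
    induction n generalizing v with
    | zero => rw [RW_zero hn]
    | succ n ih =>
      by_cases hvc : v = c
      · rw [hvc]
      · obtain ⟨b, hb, hw⟩ := hn
        have hbV : b ∈ VT r P := hRT.1 (v, b) hb
        have hvsub : v ∈ subV r P c := mem_subV_iff.2 ⟨hvV, n + 1, ⟨b, hb, hw⟩⟩
        refine Relation.ReflTransGen.head ?_ (ih b hbV hw)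
        exact Finset.mem_filter.2 ⟨hb, hvsub, hvc⟩

lemma subV_disjoint (hRT : RT r P) {c c' : Finset ℕ} (hc : c ∈ childs r P)
    (hc' : c' ∈ childs r P) (hne : c ≠ c') {v : Finset ℕ}
    (h1 : v ∈ subV r P c) (h2 : v ∈ subV r P c') : False := by
  obtain ⟨-, a, ha⟩ := mem_subV_iff.1 h1
  obtain ⟨-, b, hb⟩ := mem_subV_iff.1 h2
  -- wlog a ≤ b
  have key : ∀ (c c' : Finset ℕ), c ∈ childs r P → c' ∈ childs r P → c ≠ c' →
      ∀ (a b : ℕ) (v : Finset ℕ), a ≤ b → RW (Rp P) a v c → RW (Rp P) b v c' → False := by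
    intro c c' hc hc' hne a b v hab ha hb
    have := RW_functional_nest (RT_fun hRT) hab ha hb
    rcases Nat.eq_zero_or_pos (b - a) with h0 | hpos
    · rw [h0] at this; exact hne (RW_zero this)
    · obtain ⟨m, hm⟩ : ∃ m, b - a = m + 1 := ⟨b - a - 1, by omega⟩
      rw [hm] at this
      obtain ⟨d, hd, hw⟩ := this
      have hdr : d = r := RT_fun hRT _ _ _ hd (childs_pair hc)
      rw [hdr] at hw
      cases m with
      | zero => exact childs_ne_root hRT hc' (RW_zero hw).symm
      | succ m =>
        obtain ⟨e, he, _⟩ := hw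
        exact hRT.2.1 (r, e) he rfl
  rcases le_total a b with h | h
  · exact key c c' hc hc' hne a b v h ha hb
  · exact key c' c hc' hc (Ne.symm hne) b a v h hb ha

lemma subV_cover (hRT : RT r P) {v : Finset ℕ} (hv : v ∈ VT r P) (hvr : v ≠ r) :
    ∃ c ∈ childs r P, v ∈ subV r P c := by
  obtain ⟨n, hn⟩ := RT_reach hRT hv
  have hn0 : n ≠ 0 := fun h => hvr (by rw [h] at hn; exact RW_zero hn)
  obtain ⟨m, hm⟩ : ∃ m, n = m + 1 := ⟨n - 1, by omega⟩
  rw [hm] at hn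
  obtain ⟨u, hu, hR⟩ := RW_succ_last.1 hn
  refine ⟨u, Finset.mem_image.2 ⟨(u, r), Finset.mem_filter.2 ⟨hR, rfl⟩, rfl⟩,
    mem_subV_iff.2 ⟨hv, m, hu⟩⟩

lemma VT_eq_biUnion (hRT : RT r P) :
    VT r P = insert r ((childs r P).biUnion (subV r P)) := by
  apply Finset.ext
  intro v
  simp only [Finset.mem_insert, Finset.mem_biUnion]
  constructor
  · intro hv
    by_cases hvr : v = r
    · exact Or.inl hvr
    · obtain ⟨c, hc, hvc⟩ := subV_cover hRT hv hvr
      exact Or.inr ⟨c, hc, hvc⟩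
  · rintro (h | ⟨c, hc, hvc⟩)
    · rw [h]; exact Finset.mem_insert_self _ _
    · exact (mem_subV_iff.1 hvc).1

lemma P_eq_biUnion (hRT : RT r P) :
    P = (childs r P).biUnion (fun c => insert (c, r) (subP r P c)) := by
  apply Finset.ext
  intro q
  simp only [Finset.mem_biUnion]
  constructor
  · intro hq
    have hq1 : q.1 ∈ VT r P := fst_mem_VT hq
    have hq1r : q.1 ≠ r := hRT.2.1 q hq
    obtain ⟨c, hc, hvc⟩ := subV_cover hRT hq1 hq1r
    refine ⟨c, hc, ?_⟩
    by_cases hqc : q.1 = c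
    · have h2r : q.2 = r := hRT.2.2.1 q hq (c, r) (childs_pair hc) hqc
      have hq' : q = (c, r) := by
        rw [← hqc, ← h2r]
      rw [hq']
      exact Finset.mem_insert_self _ _
    · exact Finset.mem_insert.2 (Or.inr (Finset.mem_filter.2 ⟨hq, hvc, hqc⟩))
  · rintro ⟨c, hc, hq⟩
    rcases Finset.mem_insert.1 hq with h | h
    · rw [h]; exact childs_pair hc
    · exact (Finset.mem_filter.1 h).1

lemma root_not_mem_biUnion (hRT : RT r P) :
    r ∉ (childs r P).biUnion (subV r P) := by
  intro h
  obtain ⟨c, hc, hvc⟩ := Finset.mem_biUnion.1 h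
  exact root_not_mem_subV hRT hc hvc

lemma pairwise_disj_subV (hRT : RT r P) :
    ∀ c ∈ childs r P, ∀ c' ∈ childs r P, c ≠ c' → Disjoint (subV r P c) (subV r P c') := by
  intro c hc c' hc' hne
  rw [Finset.disjoint_left]
  intro v h1 h2
  exact subV_disjoint hRT hc hc' hne h1 h2

lemma card_VT (hRT : RT r P) :
    (VT r P).card = 1 + ∑ c ∈ childs r P, (subV r P c).card := by
  rw [VT_eq_biUnion hRT, Finset.card_insert_of_notMem (root_not_mem_biUnion hRT),
    Finset.card_biUnion (pairwise_disj_subV hRT)]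
  omega

lemma prod_VT (hRT : RT r P) (ψ : Finset ℕ → ℝ≥0∞) :
    ∏ v ∈ VT r P, ψ v = ψ r * ∏ c ∈ childs r P, ∏ v ∈ subV r P c, ψ v := by
  rw [VT_eq_biUnion hRT, Finset.prod_insert (root_not_mem_biUnion hRT),
    Finset.prod_biUnion (pairwise_disj_subV hRT)]

end RTfacts

-- ## Part A : Penrose-type bound on the truncated weight

def eAdj (e : Sym2 (Finset ℕ)) : Prop := ∀ X Y : Finset ℕ, e = s(X, Y) → adjP X Y

def KK (𝒜 : Finset (Finset ℕ)) : Finset (Sym2 (Finset ℕ)) :=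
  (𝒜.sym2.filter fun e => ¬ e.IsDiag).filter eAdj

def FF (𝒜 : Finset (Finset ℕ)) : Finset (Finset (Sym2 (Finset ℕ))) :=
  (KK 𝒜).powerset.filter (fun E => connectedOn 𝒜 E)

def relE (E : Finset (Sym2 (Finset ℕ))) : Finset ℕ → Finset ℕ → Prop :=
  fun x y => s(x, y) ∈ E

lemma relE_symm {E : Finset (Sym2 (Finset ℕ))} {x y : Finset ℕ} (h : relE E x y) :
    relE E y x := by rwa [relE, Sym2.eq_swap]

lemma truncWeight_eq (w : Finset ℕ → ℂ) (𝒜 : Finset (Finset ℕ)) :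
    truncWeight w 𝒜 = (∑ E ∈ FF 𝒜, (-1 : ℂ) ^ E.card) * ∏ A ∈ 𝒜, w A := by
  rw [truncWeight, Finset.sum_mul]
  have hsub : FF 𝒜 ⊆ (𝒜.sym2.filter fun e => ¬ e.IsDiag).powerset.filter
      (fun E => connectedOn 𝒜 E) := by
    intro E hE
    have h := Finset.mem_filter.1 hE
    have h1 : E ⊆ KK 𝒜 := Finset.mem_powerset.1 h.1
    refine Finset.mem_filter.2 ⟨Finset.mem_powerset.2 ?_, h.2⟩
    exact h1.trans (Finset.filter_subset _ _)
  rw [← Finset.sum_subset hsub]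
  · apply Finset.sum_congr rfl
    intro E hE
    have h1 : E ⊆ KK 𝒜 := Finset.mem_powerset.1 (Finset.mem_filter.1 hE).1
    have : (∏ e ∈ E, if eAdj e then (1 : ℂ) else 0) = 1 := by
      rw [Finset.prod_boole, if_pos]
      intro e he
      exact (Finset.mem_filter.1 (h1 he)).2
    rw [show (∏ e ∈ E, if ∀ X Y : Finset ℕ, e = s(X, Y) → adjP X Y then (1:ℂ) else 0)
        = (∏ e ∈ E, if eAdj e then (1 : ℂ) else 0) from rfl, this]
    ring
  · intro E hE hnE
    have h := Finset.mem_filter.1 hE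
    have hnd : E ⊆ 𝒜.sym2.filter fun e => ¬ e.IsDiag := Finset.mem_powerset.1 h.1
    have : ¬ (∀ e ∈ E, eAdj e) := by
      intro hall
      exact hnE (Finset.mem_filter.2 ⟨Finset.mem_powerset.2
        (fun e he => Finset.mem_filter.2 ⟨hnd he, hall e he⟩), h.2⟩)
    rw [show (∏ e ∈ E, if ∀ X Y : Finset ℕ, e = s(X, Y) → adjP X Y then (1:ℂ) else 0)
        = (∏ e ∈ E, if eAdj e then (1 : ℂ) else 0) from rfl, Finset.prod_boole, if_neg this]
    ring

section PenroseCtx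
variable {𝒜 : Finset (Finset ℕ)} {r : Finset ℕ} {E : Finset (Sym2 (Finset ℕ))}

lemma FF_sub_KK (hE : E ∈ FF 𝒜) : E ⊆ KK 𝒜 :=
  Finset.mem_powerset.1 (Finset.mem_filter.1 hE).1

lemma FF_conn (hE : E ∈ FF 𝒜) : connectedOn 𝒜 E := (Finset.mem_filter.1 hE).2

lemma KK_endpoints {x y : Finset ℕ} (h : s(x, y) ∈ KK 𝒜) : x ∈ 𝒜 ∧ y ∈ 𝒜 := by
  have h1 := (Finset.mem_filter.1 (Finset.mem_filter.1 h).1).1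
  rw [Finset.mk_mem_sym2_iff] at h1
  exact h1

lemma KK_ne {x y : Finset ℕ} (h : s(x, y) ∈ KK 𝒜) : x ≠ y := by
  have h1 := (Finset.mem_filter.1 (Finset.mem_filter.1 h).1).2
  rwa [Sym2.isDiag_iff_proj_eq] at h1

lemma KK_adj {x y : Finset ℕ} (h : s(x, y) ∈ KK 𝒜) : adjP x y :=
  (Finset.mem_filter.1 h).2 x y rfl

lemma E_reach (hE : E ∈ FF 𝒜) (hr : r ∈ 𝒜) {v : Finset ℕ} (hv : v ∈ 𝒜) :
    ∃ n, RW (relE E) n r v :=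
  rtg_iff_RW.1 (FF_conn hE r hr v hv)

/-- BFS level of a vertex -/
noncomputable def lev (E : Finset (Sym2 (Finset ℕ))) (r v : Finset ℕ) : ℕ :=
  distR (relE E) r v

lemma lev_root : lev E r r = 0 := distR_self r

lemma lev_step (hE : E ∈ FF 𝒜) (hr : r ∈ 𝒜) {u v : Finset ℕ} (hu : u ∈ 𝒜)
    (huv : s(u, v) ∈ E) : lev E r v ≤ lev E r u + 1 :=
  distR_step (E_reach hE hr hu) huv

lemma lev_ne_zero (hE : E ∈ FF 𝒜) (hr : r ∈ 𝒜) {v : Finset ℕ} (hv : v ∈ 𝒜)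
    (hvr : v ≠ r) : lev E r v ≠ 0 :=
  fun h0 => hvr (distR_eq_zero (E_reach hE hr hv) h0).symm

noncomputable def cand (𝒜 : Finset (Finset ℕ)) (E : Finset (Sym2 (Finset ℕ)))
    (r v : Finset ℕ) : Finset (Finset ℕ) :=
  𝒜.filter (fun u => s(u, v) ∈ E ∧ lev E r u + 1 = lev E r v)

noncomputable def parE (𝒜 : Finset (Finset ℕ)) (E : Finset (Sym2 (Finset ℕ)))
    (r v : Finset ℕ) : Finset ℕ :=
  pick (cand 𝒜 E r v)

noncomputable def tauP (𝒜 : Finset (Finset ℕ)) (E : Finset (Sym2 (Finset ℕ)))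
    (r : Finset ℕ) : Finset (Finset ℕ × Finset ℕ) :=
  (𝒜.erase r).image (fun v => (v, parE 𝒜 E r v))

lemma cand_nonempty (hE : E ∈ FF 𝒜) (hr : r ∈ 𝒜) {v : Finset ℕ} (hv : v ∈ 𝒜)
    (hvr : v ≠ r) : (cand 𝒜 E r v).Nonempty := by
  obtain ⟨u, hR, hreach, hd⟩ := exists_penult (E_reach hE hr hv)
    (lev_ne_zero hE hr hv hvr)
  have hu𝒜 : u ∈ 𝒜 := (KK_endpoints (FF_sub_KK hE hR)).1
  exact ⟨u, Finset.mem_filter.2 ⟨hu𝒜, hR, hd⟩⟩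

lemma parE_spec (hE : E ∈ FF 𝒜) (hr : r ∈ 𝒜) {v : Finset ℕ} (hv : v ∈ 𝒜) (hvr : v ≠ r) :
    parE 𝒜 E r v ∈ 𝒜 ∧ s(parE 𝒜 E r v, v) ∈ E ∧
      lev E r (parE 𝒜 E r v) + 1 = lev E r v := by
  have := pick_mem (cand_nonempty hE hr hv hvr)
  exact Finset.mem_filter.1 this

lemma parE_min (hE : E ∈ FF 𝒜) (hr : r ∈ 𝒜) {v u : Finset ℕ} (hv : v ∈ 𝒜) (hvr : v ≠ r)
    (hu : u ∈ cand 𝒜 E r v) : enc (parE 𝒜 E r v) ≤ enc u :=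
  pick_min (cand_nonempty hE hr hv hvr) u hu

lemma mem_tauP {q : Finset ℕ × Finset ℕ} :
    q ∈ tauP 𝒜 E r ↔ ∃ v ∈ 𝒜.erase r, q = (v, parE 𝒜 E r v) := by
  constructor
  · intro h
    obtain ⟨v, hv, rfl⟩ := Finset.mem_image.1 h
    exact ⟨v, hv, rfl⟩
  · rintro ⟨v, hv, rfl⟩
    exact Finset.mem_image.2 ⟨v, hv, rfl⟩

lemma VT_tauP (hr : r ∈ 𝒜) : VT r (tauP 𝒜 E r) = 𝒜 := by
  rw [VT, tauP, Finset.image_image]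
  rw [show (Prod.fst ∘ fun v : Finset ℕ => (v, parE 𝒜 E r v)) = id from rfl, Finset.image_id,
    Finset.insert_erase hr]

lemma RT_tauP (hE : E ∈ FF 𝒜) (hr : r ∈ 𝒜) : RT r (tauP 𝒜 E r) := by
  refine ⟨?_, ?_, ?_, ?_, ?_⟩
  · intro q hq
    obtain ⟨v, hv, rfl⟩ := mem_tauP.1 hq
    rw [VT_tauP hr]
    exact (parE_spec hE hr (Finset.mem_of_mem_erase hv) (Finset.ne_of_mem_erase hv)).1
  · intro q hq
    obtain ⟨v, hv, rfl⟩ := mem_tauP.1 hq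
    exact Finset.ne_of_mem_erase hv
  · intro q hq q' hq' hfst
    obtain ⟨v, hv, rfl⟩ := mem_tauP.1 hq
    obtain ⟨v', hv', rfl⟩ := mem_tauP.1 hq'
    simp only at hfst
    rw [hfst]
  · intro q hq
    obtain ⟨v, hv, rfl⟩ := mem_tauP.1 hq
    have h := (parE_spec hE hr (Finset.mem_of_mem_erase hv) (Finset.ne_of_mem_erase hv)).2.1
    have := KK_adj (FF_sub_KK hE h)
    -- adjP (parE) v, need adjP v (parE)
    obtain ⟨a, ha, b, hb, h1, h2⟩ := this
    exact ⟨b, hb, a, ha, h2, h1⟩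
  · intro v hv
    rw [VT_tauP hr] at hv
    -- strong induction on lev
    have main : ∀ n, ∀ v ∈ 𝒜, lev E r v = n → Relation.ReflTransGen (Rp (tauP 𝒜 E r)) v r := by
      intro n
      induction n using Nat.strong_induction_on with
      | _ n ih =>
        intro v hv hlev
        by_cases hvr : v = r
        · rw [hvr]
        · have hspec := parE_spec hE hr hv hvr
          have hlevp : lev E r (parE 𝒜 E r v) < n := by
            rw [← hlev]; omega
          refine Relation.ReflTransGen.head ?_
            (ih _ hlevp (parE 𝒜 E r v) hspec.1 rfl)
          exact mem_tauP.2 ⟨v, Finset.mem_erase.2 ⟨hvr, hv⟩, rfl⟩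
    exact main _ v hv rfl

lemma dep_tauP (hE : E ∈ FF 𝒜) (hr : r ∈ 𝒜) {v : Finset ℕ} (hv : v ∈ 𝒜) :
    dep r (tauP 𝒜 E r) v = lev E r v := by
  have hRT := RT_tauP hE hr
  have main : ∀ n, ∀ v ∈ 𝒜, lev E r v = n → dep r (tauP 𝒜 E r) v = n := by
    intro n
    induction n using Nat.strong_induction_on with
    | _ n ih =>
      intro v hv hlev
      by_cases hvr : v = r
      · rw [hvr] at hlev ⊢
        rw [dep_root, ← hlev, lev_root]
      · have hspec := parE_spec hE hr hv hvr
        have hvVT : v ∈ VT r (tauP 𝒜 E r) := by rw [VT_tauP hr]; exact hv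
        have hpar : parOf (tauP 𝒜 E r) v = parE 𝒜 E r v :=
          parOf_eq hRT.2.2.1 (mem_tauP.2 ⟨v, Finset.mem_erase.2 ⟨hvr, hv⟩, rfl⟩)
        rw [dep_succ hRT hvVT hvr, hpar,
          ih (lev E r (parE 𝒜 E r v)) (by omega) _ hspec.1 rfl]
        omega
  exact main _ v hv rfl

/-- edges allowed to be added to the tree `P` -/
def okP (r : Finset ℕ) (P : Finset (Finset ℕ × Finset ℕ)) (e : Sym2 (Finset ℕ)) : Prop :=
  (∃ x y, e = s(x, y) ∧ dep r P x = dep r P y) ∨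
  (∃ x y, e = s(x, y) ∧ dep r P y = dep r P x + 1 ∧ enc (parOf P y) ≤ enc x)

def DD (𝒜 : Finset (Finset ℕ)) (r : Finset ℕ) (P : Finset (Finset ℕ × Finset ℕ)) :
    Finset (Sym2 (Finset ℕ)) :=
  (KK 𝒜).filter (okP r P)

def sym2T (P : Finset (Finset ℕ × Finset ℕ)) : Finset (Sym2 (Finset ℕ)) :=
  P.image (fun q => s(q.1, q.2))

lemma tauP_sub_E (hE : E ∈ FF 𝒜) (hr : r ∈ 𝒜) : sym2T (tauP 𝒜 E r) ⊆ E := by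
  intro e he
  obtain ⟨q, hq, rfl⟩ := Finset.mem_image.1 he
  obtain ⟨v, hv, rfl⟩ := mem_tauP.1 hq
  have h := (parE_spec hE hr (Finset.mem_of_mem_erase hv) (Finset.ne_of_mem_erase hv)).2.1
  rwa [Sym2.eq_swap]

lemma E_sub_DD (hE : E ∈ FF 𝒜) (hr : r ∈ 𝒜) : E ⊆ DD 𝒜 r (tauP 𝒜 E r) := by
  intro e he
  induction e using Sym2.ind with
  | _ x y =>
    have hK : s(x, y) ∈ KK 𝒜 := FF_sub_KK hE he
    obtain ⟨hx, hy⟩ := KK_endpoints hK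
    refine Finset.mem_filter.2 ⟨hK, ?_⟩
    have h1 : lev E r y ≤ lev E r x + 1 := lev_step hE hr hx he
    have h2 : lev E r x ≤ lev E r y + 1 := lev_step hE hr hy (by rwa [Sym2.eq_swap] at he)
    rcases Nat.lt_trichotomy (lev E r x) (lev E r y) with hlt | heq | hgt
    · -- lev y = lev x + 1 : y deeper
      have hyr : y ≠ r := by
        intro h; rw [h, lev_root] at hlt; omega
      have hcand : x ∈ cand 𝒜 E r y :=
        Finset.mem_filter.2 ⟨hx, he, by omega⟩
      have hpar : parOf (tauP 𝒜 E r) y = parE 𝒜 E r y :=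
        parOf_eq (RT_tauP hE hr).2.2.1
          (mem_tauP.2 ⟨y, Finset.mem_erase.2 ⟨hyr, hy⟩, rfl⟩)
      right
      refine ⟨x, y, rfl, ?_, ?_⟩
      · rw [dep_tauP hE hr hx, dep_tauP hE hr hy]; omega
      · rw [hpar]; exact parE_min hE hr hy hyr hcand
    · left
      exact ⟨x, y, rfl, by rw [dep_tauP hE hr hx, dep_tauP hE hr hy, heq]⟩
    · -- x deeper
      have hxr : x ≠ r := by
        intro h; rw [h, lev_root] at hgt; omega
      have hcand : y ∈ cand 𝒜 E r x :=
        Finset.mem_filter.2 ⟨hy, by rwa [Sym2.eq_swap] at he, by omega⟩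
      have hpar : parOf (tauP 𝒜 E r) x = parE 𝒜 E r x :=
        parOf_eq (RT_tauP hE hr).2.2.1
          (mem_tauP.2 ⟨x, Finset.mem_erase.2 ⟨hxr, hx⟩, rfl⟩)
      right
      refine ⟨y, x, Sym2.eq_swap, ?_, ?_⟩
      · rw [dep_tauP hE hr hx, dep_tauP hE hr hy]; omega
      · rw [hpar]; exact parE_min hE hr hx hxr hcand

end PenroseCtx

section Backward
variable {𝒜 : Finset (Finset ℕ)} {r : Finset ℕ} {P : Finset (Finset ℕ × Finset ℕ)}
  {E : Finset (Sym2 (Finset ℕ))}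

lemma sym2T_mem {x y : Finset ℕ} (h : (x, y) ∈ P) : s(x, y) ∈ sym2T P :=
  Finset.mem_image.2 ⟨(x, y), h, rfl⟩

/-- backward: any E between the tree and its allowed edges is connected and spans -/
lemma bwd_conn (hRT : RT r P) (hVT : VT r P = 𝒜) (hr : r ∈ 𝒜)
    (hTE : sym2T P ⊆ E) : connectedOn 𝒜 E := by
  have hvr : ∀ v ∈ 𝒜, Relation.ReflTransGen (relE E) v r := by
    intro v hv
    have := hRT.2.2.2.2 v (by rwa [hVT])
    refine Relation.ReflTransGen.mono ?_ _ _ this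
    intro a b hab
    exact hTE (sym2T_mem hab)
  intro x hx y hy
  exact (hvr x hx).trans (rtg_symm (fun a b h => relE_symm h) (hvr y hy))

lemma DD_edge_dep {x y : Finset ℕ} (h : s(x, y) ∈ DD 𝒜 r P) :
    dep r P y ≤ dep r P x + 1 := by
  have hok := (Finset.mem_filter.1 h).2
  rcases hok with ⟨a, b, he, hd⟩ | ⟨a, b, he, hd, _⟩ <;>
  · rcases Sym2.eq_iff.1 he with ⟨h1, h2⟩ | ⟨h1, h2⟩ <;> subst h1 <;> subst h2 <;> omega

lemma bwd_RW_dep (hRT : RT r P) (hVT : VT r P = 𝒜) (hTE : sym2T P ⊆ E) :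
    ∀ n, ∀ v ∈ 𝒜, dep r P v = n → RW (relE E) n r v := by
  intro n
  induction n using Nat.strong_induction_on with
  | _ n ih =>
    intro v hv hdep
    by_cases hvr : v = r
    · rw [hvr] at hdep ⊢
      rw [dep_root] at hdep
      rw [← hdep]
      rfl
    · have hvVT : v ∈ VT r P := by rwa [hVT]
      have hsucc := dep_succ hRT hvVT hvr
      have hparVT := parOf_mem_VT hRT hvVT hvr
      have hpar𝒜 : parOf P v ∈ 𝒜 := by rwa [hVT] at hparVT
      have hw : RW (relE E) (dep r P (parOf P v)) r (parOf P v) :=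
        ih _ (by omega) _ hpar𝒜 rfl
      have hedge : relE E (parOf P v) v := by
        have := hTE (sym2T_mem (parOf_pair_mem hRT hvVT hvr))
        rwa [relE, Sym2.eq_swap]
      have := RW_trans hw (RW_single hedge)
      rw [← hdep, hsucc]
      exact this

lemma bwd_lev_eq_dep (hRT : RT r P) (hVT : VT r P = 𝒜) (hr : r ∈ 𝒜)
    (hTE : sym2T P ⊆ E) (hED : E ⊆ DD 𝒜 r P) {v : Finset ℕ} (hv : v ∈ 𝒜) :
    lev E r v = dep r P v := by
  have h1 : lev E r v ≤ dep r P v :=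
    distR_le (bwd_RW_dep hRT hVT hTE _ v hv rfl)
  have h2 : dep r P v ≤ lev E r v := by
    have hreach : ∃ n, RW (relE E) n r v := ⟨_, bwd_RW_dep hRT hVT hTE _ v hv rfl⟩
    have hspec := distR_spec hreach
    have := level_le_of_RW (dep r P)
      (fun x y hxy => DD_edge_dep (hED hxy)) hspec
    rw [dep_root] at this
    simpa [lev] using this
  omega

lemma bwd_FF (hRT : RT r P) (hVT : VT r P = 𝒜) (hr : r ∈ 𝒜)
    (hTE : sym2T P ⊆ E) (hED : E ⊆ DD 𝒜 r P) : E ∈ FF 𝒜 :=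
  Finset.mem_filter.2 ⟨Finset.mem_powerset.2 (hED.trans (Finset.filter_subset _ _)),
    bwd_conn hRT hVT hr hTE⟩

lemma bwd_tauP (hRT : RT r P) (hVT : VT r P = 𝒜) (hr : r ∈ 𝒜)
    (hTE : sym2T P ⊆ E) (hED : E ⊆ DD 𝒜 r P) : tauP 𝒜 E r = P := by
  have hE : E ∈ FF 𝒜 := bwd_FF hRT hVT hr hTE hED
  have hparE : ∀ v ∈ 𝒜, v ≠ r → parE 𝒜 E r v = parOf P v := by
    intro v hv hvr
    have hvVT : v ∈ VT r P := by rwa [hVT]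
    have hdep := dep_succ hRT hvVT hvr
    have hparVT := parOf_mem_VT hRT hvVT hvr
    apply pick_eq
    · -- parOf P v ∈ cand
      refine Finset.mem_filter.2 ⟨by rwa [hVT] at hparVT, ?_, ?_⟩
      · have := hTE (sym2T_mem (parOf_pair_mem hRT hvVT hvr))
        rwa [Sym2.eq_swap] at this
      · rw [bwd_lev_eq_dep hRT hVT hr hTE hED (by rwa [hVT] at hparVT),
          bwd_lev_eq_dep hRT hVT hr hTE hED hv]
        omega
    · intro u hu
      obtain ⟨hu𝒜, huE, hulev⟩ := Finset.mem_filter.1 hu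
      have huD := hED huE
      have hok := (Finset.mem_filter.1 huD).2
      rw [bwd_lev_eq_dep hRT hVT hr hTE hED hu𝒜,
        bwd_lev_eq_dep hRT hVT hr hTE hED hv] at hulev
      rcases hok with ⟨a, b, he, hd⟩ | ⟨a, b, he, hd, hmin⟩
      · rcases Sym2.eq_iff.1 he with ⟨h1, h2⟩ | ⟨h1, h2⟩ <;> subst h1 <;> subst h2 <;> omega
      · rcases Sym2.eq_iff.1 he with ⟨h1, h2⟩ | ⟨h1, h2⟩
        · subst h1; subst h2; exact hmin
        · subst h1; subst h2; omega
  apply Finset.ext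
  intro q
  constructor
  · intro hq
    obtain ⟨v, hv, rfl⟩ := mem_tauP.1 hq
    have hv𝒜 := Finset.mem_of_mem_erase hv
    have hvr := Finset.ne_of_mem_erase hv
    rw [hparE v hv𝒜 hvr]
    exact parOf_pair_mem hRT (by rwa [hVT]) hvr
  · intro hq
    have hq1VT : q.1 ∈ VT r P := fst_mem_VT hq
    have hq1r : q.1 ≠ r := hRT.2.1 q hq
    have hq2 : parOf P q.1 = q.2 := parOf_eq hRT.2.2.1 (by rwa [show ((q.1, q.2) : _ × _) = q from rfl])
    refine mem_tauP.2 ⟨q.1, Finset.mem_erase.2 ⟨hq1r, by rwa [hVT] at hq1VT⟩, ?_⟩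
    rw [hparE q.1 (by rwa [hVT] at hq1VT) hq1r, hq2]

end Backward

-- ## fiber sums and counting

def Pcount (𝒜 : Finset (Finset ℕ)) (r : Finset ℕ) : Finset (Finset (Finset ℕ × Finset ℕ)) :=
  ((𝒜 ×ˢ 𝒜).powerset).filter (fun P => RT r P ∧ VT r P = 𝒜)

section Count
variable {𝒜 : Finset (Finset ℕ)} {r : Finset ℕ}

lemma tauP_mem_Pcount {E : Finset (Sym2 (Finset ℕ))} (hE : E ∈ FF 𝒜) (hr : r ∈ 𝒜) :
    tauP 𝒜 E r ∈ Pcount 𝒜 r := by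
  refine Finset.mem_filter.2 ⟨Finset.mem_powerset.2 ?_, RT_tauP hE hr, VT_tauP hr⟩
  intro q hq
  obtain ⟨v, hv, rfl⟩ := mem_tauP.1 hq
  exact Finset.mem_product.2 ⟨Finset.mem_of_mem_erase hv,
    (parE_spec hE hr (Finset.mem_of_mem_erase hv) (Finset.ne_of_mem_erase hv)).1⟩

lemma fiber_eq {E₀ : Finset (Sym2 (Finset ℕ))} (hE₀ : E₀ ∈ FF 𝒜) (hr : r ∈ 𝒜) :
    (FF 𝒜).filter (fun E => tauP 𝒜 E r = tauP 𝒜 E₀ r) =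
      ((DD 𝒜 r (tauP 𝒜 E₀ r)).powerset).filter (fun E => sym2T (tauP 𝒜 E₀ r) ⊆ E) := by
  set P := tauP 𝒜 E₀ r with hP
  have hRT : RT r P := RT_tauP hE₀ hr
  have hVT : VT r P = 𝒜 := VT_tauP hr
  apply Finset.ext
  intro E
  constructor
  · intro hE
    obtain ⟨hEF, hEt⟩ := Finset.mem_filter.1 hE
    refine Finset.mem_filter.2 ⟨Finset.mem_powerset.2 ?_, ?_⟩
    · have := E_sub_DD hEF hr
      rwa [hEt] at this
    · have := tauP_sub_E hEF hr
      rwa [hEt] at this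
  · intro hE
    obtain ⟨hED, hTE⟩ := Finset.mem_filter.1 hE
    have hED := Finset.mem_powerset.1 hED
    exact Finset.mem_filter.2 ⟨bwd_FF hRT hVT hr hTE hED, bwd_tauP hRT hVT hr hTE hED⟩

lemma abs_interval_sum (D T : Finset (Sym2 (Finset ℕ))) (hTD : T ⊆ D) :
    ‖∑ E ∈ D.powerset.filter (fun E => T ⊆ E), (-1 : ℂ) ^ E.card‖ ≤ 1 := by
  have himg : D.powerset.filter (fun E => T ⊆ E) = ((D \ T).powerset).image (fun S => S ∪ T) := by
    apply Finset.ext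
    intro E
    simp only [Finset.mem_filter, Finset.mem_powerset, Finset.mem_image]
    constructor
    · rintro ⟨hED, hTE⟩
      refine ⟨E \ T, fun x hx => ?_, ?_⟩
      · have := Finset.mem_sdiff.1 hx
        exact Finset.mem_sdiff.2 ⟨hED this.1, this.2⟩
      · rw [Finset.sdiff_union_of_subset hTE]
    · rintro ⟨S, hS, rfl⟩
      constructor
      · intro x hx
        rcases Finset.mem_union.1 hx with h | h
        · exact (Finset.mem_sdiff.1 (hS h)).1
        · exact hTD h
      · exact Finset.subset_union_right
  rw [himg, Finset.sum_image ?inj]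
  case inj =>
    intro S hS S' hS' h
    have key : ∀ X ∈ (D \ T).powerset, X = (X ∪ T) \ T := by
      intro X hX
      rw [Finset.union_sdiff_right]
      apply (Finset.sdiff_eq_self_of_disjoint ?_).symm
      rw [Finset.disjoint_right]
      intro a haT haX
      exact (Finset.mem_sdiff.1 (Finset.mem_powerset.1 hX haX)).2 haT
    rw [key S hS, key S' hS', show S ∪ T = S' ∪ T from h]
  have hcard : ∀ S ∈ (D \ T).powerset, (S ∪ T).card = S.card + T.card := by
    intro S hS
    apply Finset.card_union_of_disjoint
    rw [Finset.disjoint_right]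
    intro a haT haS
    exact (Finset.mem_sdiff.1 (Finset.mem_powerset.1 hS haS)).2 haT
  rw [Finset.sum_congr rfl (fun S hS => by rw [hcard S hS, pow_add])]
  rw [← Finset.sum_mul]
  have hZ : (∑ m ∈ (D \ T).powerset, (-1 : ℂ) ^ m.card) = if (D \ T) = ∅ then 1 else 0 := by
    have h := congrArg (Int.cast : ℤ → ℂ) (Finset.sum_powerset_neg_one_pow_card (x := D \ T))
    push_cast at h
    convert h using 2
  rw [hZ, norm_mul]
  rcases eq_or_ne (D \ T) ∅ with h | h
  · rw [if_pos h]
    simp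
  · rw [if_neg h]
    simp

lemma abs_FF_sum_le (hr : r ∈ 𝒜) :
    ‖∑ E ∈ FF 𝒜, (-1 : ℂ) ^ E.card‖ ≤ (Pcount 𝒜 r).card := by
  have hmap : ∀ E ∈ FF 𝒜, tauP 𝒜 E r ∈ (FF 𝒜).image (fun E => tauP 𝒜 E r) :=
    fun E hE => Finset.mem_image.2 ⟨E, hE, rfl⟩
  rw [← Finset.sum_fiberwise_of_maps_to hmap]
  calc ‖_‖ ≤ ∑ P ∈ (FF 𝒜).image (fun E => tauP 𝒜 E r),
      ‖∑ E ∈ (FF 𝒜).filter (fun E => tauP 𝒜 E r = P), (-1 : ℂ) ^ E.card‖ := by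
        exact norm_sum_le _ _
  _ ≤ ∑ _P ∈ (FF 𝒜).image (fun E => tauP 𝒜 E r), 1 := by
      apply Finset.sum_le_sum
      intro P hP
      obtain ⟨E₀, hE₀, rfl⟩ := Finset.mem_image.1 hP
      rw [fiber_eq hE₀ hr]
      apply abs_interval_sum
      intro e he
      obtain ⟨q, hq, rfl⟩ := Finset.mem_image.1 he
      have hRT := RT_tauP hE₀ hr
      refine Finset.mem_filter.2 ⟨?_, ?_⟩
      · -- tree edge in KK
        have hq1 : q.1 ∈ 𝒜 := by
          have := fst_mem_VT (r := r) hq; rwa [VT_tauP hr] at this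
        have hq2 : q.2 ∈ 𝒜 := by
          have := hRT.1 q hq; rwa [VT_tauP hr] at this
        have hadj : adjP q.1 q.2 := hRT.2.2.2.1 q hq
        have hne : q.1 ≠ q.2 := by
          intro h
          have hd := dep_succ hRT (by rw [VT_tauP hr]; exact hq1) (hRT.2.1 q hq)
          have hpar : parOf (tauP 𝒜 E₀ r) q.1 = q.2 :=
            parOf_eq hRT.2.2.1 (by rwa [show ((q.1, q.2) : _ × _) = q from rfl])
          rw [hpar, ← h] at hd
          omega
        refine Finset.mem_filter.2 ⟨Finset.mem_filter.2 ⟨?_, ?_⟩, ?_⟩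
        · rw [Finset.mk_mem_sym2_iff]
          exact ⟨hq1, hq2⟩
        · rwa [Sym2.isDiag_iff_proj_eq]
        · intro X Y hXY
          rcases Sym2.eq_iff.1 hXY with ⟨h1, h2⟩ | ⟨h1, h2⟩
          · rw [← h1, ← h2]; exact hadj
          · rw [← h1, ← h2]
            obtain ⟨a, ha, b, hb, g1, g2⟩ := hadj
            exact ⟨b, hb, a, ha, g2, g1⟩
      · -- tree edge is ok
        right
        have hq1VT : q.1 ∈ VT r (tauP 𝒜 E₀ r) := fst_mem_VT hq
        have hd := dep_succ hRT hq1VT (hRT.2.1 q hq)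
        have hpar : parOf (tauP 𝒜 E₀ r) q.1 = q.2 :=
          parOf_eq hRT.2.2.1 (by rwa [show ((q.1, q.2) : _ × _) = q from rfl])
        exact ⟨q.2, q.1, Sym2.eq_swap, by rw [hpar] at hd; exact hd, by rw [hpar]⟩
  _ ≤ (Pcount 𝒜 r).card := by
      rw [Finset.sum_const, Nat.smul_one_eq_cast]
      have : (FF 𝒜).image (fun E => tauP 𝒜 E r) ⊆ Pcount 𝒜 r := by
        intro P hP
        obtain ⟨E₀, hE₀, rfl⟩ := Finset.mem_image.1 hP
        exact tauP_mem_Pcount hE₀ hr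
      exact_mod_cast Nat.cast_le.2 (Finset.card_le_card this)

/-- Part A : Penrose bound -/
lemma partA (w : Finset ℕ → ℂ) (hr : r ∈ 𝒜) :
    ‖truncWeight w 𝒜‖ ≤
      ((Pcount 𝒜 r).card : ℝ) * ∏ A ∈ 𝒜, ‖w A‖ := by
  rw [truncWeight_eq, norm_mul]
  have h2 : ‖∏ A ∈ 𝒜, w A‖ = ∏ A ∈ 𝒜, ‖w A‖ := norm_prod _ _
  rw [h2]
  exact mul_le_mul_of_nonneg_right (abs_FF_sum_le hr)
    (Finset.prod_nonneg fun A _ => norm_nonneg _)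

end Count

-- ## Part B : summing tree structures against the KP criterion

abbrev TI := Finset ℕ × Finset (Finset ℕ × Finset ℕ)

section PartB
variable (ψ : Finset ℕ → ℝ≥0∞)

def fnn (N : ℕ) (B : Finset ℕ) (rp : TI) : ℝ≥0∞ :=
  if RT rp.1 rp.2 ∧ adjP rp.1 B ∧ (VT rp.1 rp.2).card ≤ N then ∏ v ∈ VT rp.1 rp.2, ψ v else 0

def SN (N : ℕ) (B : Finset ℕ) : ℝ≥0∞ := ∑' rp : TI, fnn ψ N B rp

def GG (B : Finset ℕ) (rp : TI) : ℝ≥0∞ :=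
  if RT rp.1 rp.2 ∧ adjP rp.1 B then ∏ v ∈ VT rp.1 rp.2, ψ v else 0

abbrev XX := Finset ℕ × (Σ _k : ℕ, Fin _k → TI)

def recP (A : Finset ℕ) (k : ℕ) (g : Fin k → TI) : Finset (Finset ℕ × Finset ℕ) :=
  Finset.univ.biUnion (fun i => insert ((g i).1, A) (g i).2)

def decX (x : XX) : TI := (x.1, recP x.1 x.2.1 x.2.2)

def FX (N : ℕ) (B : Finset ℕ) (x : XX) : ℝ≥0∞ :=
  if adjP x.1 B then ψ x.1 * (∏ i, fnn ψ N x.1 (x.2.2 i)) * ((x.2.1.factorial : ℝ≥0∞))⁻¹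
  else 0

variable {r B : Finset ℕ} {P : Finset (Finset ℕ × Finset ℕ)} {N : ℕ}

lemma decomp_le (hRT : RT r P) (hadj : adjP r B) (hcard : (VT r P).card ≤ N + 1) :
    fnn ψ (N + 1) B (r, P) ≤ ∑' x : {x : XX // decX x = (r, P)}, FX ψ N B x.1 := by
  classical
  set k := (childs r P).card with hk
  set e := (childs r P).equivFin with he
  set g₀ : Fin k → TI := fun i => (((e.symm i : { x // x ∈ childs r P }) : Finset ℕ),
    subP r P ((e.symm i : { x // x ∈ childs r P }) : Finset ℕ)) with hg₀
  have hsum_card : 1 + ∑ c ∈ childs r P, (subV r P c).card ≤ N + 1 := by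
    rw [← card_VT hRT]; exact hcard
  have hsub_card : ∀ c ∈ childs r P, (subV r P c).card ≤ N := by
    intro c hc
    have h1 : (subV r P c).card ≤ ∑ c ∈ childs r P, (subV r P c).card :=
      Finset.single_le_sum (f := fun c => (subV r P c).card) (fun _ _ => Nat.zero_le _) hc
    omega
  have hfnn_sub : ∀ c ∈ childs r P, fnn ψ N r (c, subP r P c) = ∏ v ∈ subV r P c, ψ v := by
    intro c hc
    rw [fnn, if_pos, VT_subP hRT hc]
    refine ⟨RT_subP hRT hc, hRT.2.2.2.1 (c, r) (childs_pair hc), ?_⟩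
    rw [VT_subP hRT hc]
    exact hsub_card c hc
  -- the permuted elements
  set xs : Equiv.Perm (Fin k) → XX := fun σ => (r, ⟨k, g₀ ∘ σ⟩) with hxs
  have hg₀inj : Function.Injective g₀ := by
    intro i j hij
    have : ((e.symm i : { x // x ∈ childs r P }) : Finset ℕ)
        = ((e.symm j : { x // x ∈ childs r P }) : Finset ℕ) := congrArg Prod.fst hij
    exact e.symm.injective (Subtype.ext this)
  have hdec : ∀ σ, decX (xs σ) = (r, P) := by
    intro σ
    rw [decX]
    refine Prod.ext rfl ?_
    show recP r k (g₀ ∘ σ) = P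
    rw [recP]
    conv_rhs => rw [P_eq_biUnion hRT]
    apply Finset.ext
    intro q
    simp only [Finset.mem_biUnion, Finset.mem_univ, true_and]
    constructor
    · rintro ⟨i, hi⟩
      exact ⟨((e.symm (σ i) : { x // x ∈ childs r P }) : Finset ℕ),
        (e.symm (σ i)).2, hi⟩
    · rintro ⟨c, hc, hq⟩
      refine ⟨σ⁻¹ (e ⟨c, hc⟩), ?_⟩
      simp only [Function.comp, hg₀, Equiv.Perm.inv_def, Equiv.apply_symm_apply, Equiv.symm_apply_apply]
      exact hq
  have hFX : ∀ σ, FX ψ N B (xs σ) =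
      ψ r * (∏ c ∈ childs r P, ∏ v ∈ subV r P c, ψ v) * ((k.factorial : ℝ≥0∞))⁻¹ := by
    intro σ
    rw [FX, if_pos hadj]
    congr 2
    show (∏ i, fnn ψ N r ((g₀ ∘ σ) i)) = _
    apply Finset.prod_bij
      (i := fun (i : Fin k) (_ : i ∈ Finset.univ) =>
        ((e.symm (σ i) : { x // x ∈ childs r P }) : Finset ℕ))
    · intro i _
      exact (e.symm (σ i)).2
    · intro i _ j _ hij
      exact σ.injective (e.symm.injective (Subtype.ext hij))
    · intro c hc
      refine ⟨σ⁻¹ (e ⟨c, hc⟩), Finset.mem_univ _, ?_⟩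
      simp
    · intro i _
      exact hfnn_sub _ (e.symm (σ i)).2
  have hxs_inj : ∀ σ1 ∈ (Finset.univ : Finset (Equiv.Perm (Fin k))), ∀ σ2 ∈ Finset.univ,
      (fun σ => (⟨xs σ, hdec σ⟩ : {x : XX // decX x = (r, P)})) σ1 =
      (fun σ => (⟨xs σ, hdec σ⟩ : {x : XX // decX x = (r, P)})) σ2 → σ1 = σ2 := by
    intro σ1 _ σ2 _ h
    have h1 : xs σ1 = xs σ2 := congrArg Subtype.val h
    have h2 : (⟨k, g₀ ∘ σ1⟩ : Σ _k : ℕ, Fin _k → TI) = ⟨k, g₀ ∘ σ2⟩ := congrArg Prod.snd h1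
    have h3 : g₀ ∘ σ1 = g₀ ∘ σ2 := eq_of_heq (Sigma.mk.inj_iff.1 h2).2
    apply Equiv.ext
    intro i
    exact hg₀inj (congrFun h3 i)
  have hsum := sum_le_tsum_of_inj (Finset.univ : Finset (Equiv.Perm (Fin k)))
    (fun σ => (⟨xs σ, hdec σ⟩ : {x : XX // decX x = (r, P)})) hxs_inj
    (fun x => FX ψ N B x.1)
  refine le_trans ?_ hsum
  simp only [hFX]
  rw [Finset.sum_const, Finset.card_univ, Fintype.card_perm, Fintype.card_fin]
  rw [fnn, if_pos ⟨hRT, hadj, hcard⟩]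
  rw [prod_VT hRT ψ]
  rw [nsmul_eq_mul]
  rw [mul_comm (ψ r * _) _, ← mul_assoc]
  rw [mul_assoc ((k.factorial : ℝ≥0∞)) _ _]
  rw [← mul_assoc ((k.factorial : ℝ≥0∞)) _ _]
  rw [ENNReal.mul_inv_cancel (by exact_mod_cast Nat.factorial_pos k |>.ne')
    (ENNReal.natCast_ne_top _)]
  rw [one_mul]

lemma SN_succ_le : SN ψ (N + 1) B ≤ ∑' x : XX, FX ψ N B x := by
  apply tsum_le_tsum_fiber (fnn ψ (N + 1) B) (FX ψ N B) decX
  rintro ⟨r, P⟩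
  by_cases h : RT r P ∧ adjP r B ∧ (VT r P).card ≤ N + 1
  · exact decomp_le ψ h.1 h.2.1 h.2.2
  · rw [fnn, if_neg h]
    exact zero_le

lemma tsum_FX_eq :
    (∑' x : XX, FX ψ N B x) = ∑' A : Finset ℕ, if adjP A B then ψ A * expE (SN ψ N A) else 0 := by
  rw [ENNReal.tsum_prod']
  apply tsum_congr
  intro A
  rw [ENNReal.tsum_sigma' (f := fun p : Σ _k : ℕ, Fin _k → TI => FX ψ N B (A, p))]
  by_cases h : adjP A B
  · rw [if_pos h]
    have : ∀ k (g : Fin k → TI), FX ψ N B (A, ⟨k, g⟩)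
        = ψ A * (∏ i, fnn ψ N A (g i)) * ((k.factorial : ℝ≥0∞))⁻¹ := by
      intro k g
      rw [FX, if_pos h]
    simp_rw [this, mul_assoc, ENNReal.tsum_mul_left]
    congr 1
    rw [expE]
    apply tsum_congr
    intro k
    rw [ENNReal.tsum_mul_right, ← tsum_pow (fun rp => fnn ψ N A rp) k]
    rfl
  · rw [if_neg h]
    apply ENNReal.tsum_eq_zero.2
    intro k
    apply ENNReal.tsum_eq_zero.2
    intro g
    simp only [FX]
    rw [if_neg h]

lemma SN_le {δ : ℝ} (hδ : 0 < δ)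
    (hKP' : ∀ B' : Finset ℕ,
      (∑' A : Finset ℕ, if adjP A B'
        then ψ A * ENNReal.ofReal (Real.exp (δ * A.card)) else 0)
        ≤ ENNReal.ofReal (δ * B'.card)) :
    ∀ N, ∀ B' : Finset ℕ, SN ψ N B' ≤ ENNReal.ofReal (δ * B'.card) := by
  intro N
  induction N with
  | zero =>
    intro B'
    have : ∀ rp : TI, fnn ψ 0 B' rp = 0 := by
      intro rp
      rw [fnn, if_neg]
      rintro ⟨-, -, hcard⟩
      have : (VT rp.1 rp.2).Nonempty := Finset.insert_nonempty _ _
      have := Finset.card_pos.2 this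
      omega
    rw [SN]
    simp_rw [this]
    simp
  | succ N ih =>
    intro B'
    calc SN ψ (N + 1) B' ≤ ∑' x : XX, FX ψ N B' x := SN_succ_le ψ
    _ = ∑' A : Finset ℕ, if adjP A B' then ψ A * expE (SN ψ N A) else 0 := tsum_FX_eq ψ
    _ ≤ ∑' A : Finset ℕ, if adjP A B'
        then ψ A * ENNReal.ofReal (Real.exp (δ * A.card)) else 0 := by
      apply ENNReal.tsum_le_tsum
      intro A
      by_cases h : adjP A B'
      · rw [if_pos h, if_pos h]
        apply mul_le_mul_right
        calc expE (SN ψ N A) ≤ expE (ENNReal.ofReal (δ * A.card)) := expE_mono (ih A)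
        _ = ENNReal.ofReal (Real.exp (δ * A.card)) :=
          expE_ofReal _ (by positivity)
      · rw [if_neg h, if_neg h]
    _ ≤ ENNReal.ofReal (δ * B'.card) := hKP' B'

/-- Part B: the total tree sum is controlled. -/
lemma partB {δ : ℝ} (hδ : 0 < δ)
    (hKP' : ∀ B' : Finset ℕ,
      (∑' A : Finset ℕ, if adjP A B'
        then ψ A * ENNReal.ofReal (Real.exp (δ * A.card)) else 0)
        ≤ ENNReal.ofReal (δ * B'.card)) (B' : Finset ℕ) :
    (∑' rp : TI, GG ψ B' rp) ≤ ENNReal.ofReal (δ * B'.card) := by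
  rw [ENNReal.tsum_eq_iSup_sum]
  apply iSup_le
  intro s
  set N := s.sup (fun rp => (VT rp.1 rp.2).card) with hN
  have h1 : (∑ rp ∈ s, GG ψ B' rp) ≤ (∑ rp ∈ s, fnn ψ N B' rp) := by
    apply Finset.sum_le_sum
    intro rp hrp
    simp only [GG, fnn]
    by_cases h : RT rp.1 rp.2 ∧ adjP rp.1 B'
    · rw [if_pos h, if_pos ⟨h.1, h.2, Finset.le_sup (f := fun rp => (VT rp.1 rp.2).card) hrp⟩]
    · rw [if_neg h, if_neg (fun hc => h ⟨hc.1, hc.2.1⟩)]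
  have h2 : (∑ rp ∈ s, fnn ψ N B' rp) ≤ SN ψ N B' := ENNReal.sum_le_tsum s
  exact le_trans h1 (le_trans h2 (SN_le ψ hδ hKP' N B'))

end PartB

-- ## Part D : geometry of clusters

def Mx (A : Finset ℕ) : ℕ := WithBot.unbotD 0 (A.max)
def Mn (A : Finset ℕ) : ℕ := WithTop.untopD 0 (A.min)

lemma diamP_eq (A : Finset ℕ) : diamP A = 1 + Mx A - Mn A := rfl

lemma mem_le_Mx {A : Finset ℕ} {b : ℕ} (hb : b ∈ A) : b ≤ Mx A := by
  have hne : A.Nonempty := ⟨b, hb⟩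
  have h1 := Finset.le_max' A b hb
  have h2 : (A.max' hne : WithBot ℕ) = A.max := Finset.coe_max' hne
  rw [Mx, ← h2]
  simpa using h1

lemma Mn_le_mem {A : Finset ℕ} {b : ℕ} (hb : b ∈ A) : Mn A ≤ b := by
  have hne : A.Nonempty := ⟨b, hb⟩
  have h1 := Finset.min'_le A b hb
  have h2 : (A.min' hne : WithTop ℕ) = A.min := Finset.coe_min' hne
  rw [Mn, ← h2]
  exact h1

lemma Mn_le_Mx {A : Finset ℕ} (hA : A.Nonempty) : Mn A ≤ Mx A := by
  obtain ⟨b, hb⟩ := hA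
  exact le_trans (Mn_le_mem hb) (mem_le_Mx hb)

lemma diamP_empty : diamP (∅ : Finset ℕ) = 1 := by simp [diamP]

lemma nonempty_of_two_le_diamP {A : Finset ℕ} (h : 2 ≤ diamP A) : A.Nonempty := by
  rcases Finset.eq_empty_or_nonempty A with rfl | hA
  · rw [diamP_empty] at h; omega
  · exact hA

lemma adjP_symm {A B : Finset ℕ} (h : adjP A B) : adjP B A := by
  obtain ⟨a, ha, b, hb, h1, h2⟩ := h
  exact ⟨b, hb, a, ha, h2, h1⟩

/-- adjacency graph of a cluster -/
def Gc (𝒜 : Finset (Finset ℕ)) : SimpleGraph (Finset ℕ) :=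
  SimpleGraph.fromRel (fun X Y => X ∈ 𝒜 ∧ Y ∈ 𝒜 ∧ adjP X Y)

lemma Gc_adj {𝒜 : Finset (Finset ℕ)} {X Y : Finset ℕ} (h : (Gc 𝒜).Adj X Y) :
    X ∈ 𝒜 ∧ Y ∈ 𝒜 ∧ adjP X Y := by
  rw [Gc, SimpleGraph.fromRel_adj] at h
  rcases h.2 with ⟨h1, h2, h3⟩ | ⟨h1, h2, h3⟩
  · exact ⟨h1, h2, h3⟩
  · exact ⟨h2, h1, adjP_symm h3⟩

lemma Gc_reachable {𝒜 : Finset (Finset ℕ)} (hconn : clusterConn 𝒜) {X Y : Finset ℕ}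
    (hX : X ∈ 𝒜) (hY : Y ∈ 𝒜) : (Gc 𝒜).Reachable X Y := by
  rw [SimpleGraph.reachable_iff_reflTransGen]
  have h := hconn X hX Y hY
  induction h with
  | refl => rfl
  | @tail b c _ hbc ih =>
    rcases eq_or_ne b c with rfl | hne
    · exact ih hbc.1
    · exact Relation.ReflTransGen.tail (ih hbc.1)
        ((SimpleGraph.fromRel_adj _ _ _).2 ⟨hne, Or.inl hbc⟩)

lemma walk_support_mem {𝒜 : Finset (Finset ℕ)} :
    ∀ {X Y : Finset ℕ} (W : (Gc 𝒜).Walk X Y), X ∈ 𝒜 → ∀ Z ∈ W.support, Z ∈ 𝒜 := by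
  intro X Y W
  induction W with
  | nil =>
    intro hX Z hZ
    rw [SimpleGraph.Walk.support_nil] at hZ
    simp only [List.mem_singleton] at hZ
    rwa [hZ]
  | @cons a b c h W ih =>
    intro hX Z hZ
    rw [SimpleGraph.Walk.support_cons] at hZ
    rcases List.mem_cons.1 hZ with rfl | hZ
    · exact hX
    · exact ih (Gc_adj h).2.1 Z hZ

lemma walk_tele {𝒜 : Finset (Finset ℕ)} (h2 : ∀ A ∈ 𝒜, A.Nonempty) :
    ∀ {X Y : Finset ℕ} (W : (Gc 𝒜).Walk X Y), X ∈ 𝒜 → W.support.Nodup →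
      Mx Y + 1 ≤ Mn X + ∑ Z ∈ W.support.toFinset, diamP Z := by
  intro X Y W
  induction W with
  | nil =>
    intro hX _
    rw [SimpleGraph.Walk.support_nil]
    have hXne := h2 _ hX
    have := Mn_le_Mx hXne
    simp only [List.toFinset_cons, List.toFinset_nil, insert_empty_eq, Finset.sum_singleton]
    rw [diamP_eq]
    omega
  | @cons a b c h W ih =>
    intro hX hnodup
    rw [SimpleGraph.Walk.support_cons] at hnodup ⊢
    rw [List.nodup_cons] at hnodup
    obtain ⟨haW, hnodup⟩ := hnodup
    have hb𝒜 : b ∈ 𝒜 := (Gc_adj h).2.1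
    have hIH := ih hb𝒜 hnodup
    have hadj : adjP a b := (Gc_adj h).2.2
    obtain ⟨x, hx, y, hy, hxy1, hxy2⟩ := hadj
    have h1 : x ≤ Mx a := mem_le_Mx hx
    have h3 : Mn b ≤ y := Mn_le_mem hy
    have hane := h2 a hX
    have h4 : Mn a ≤ Mx a := Mn_le_Mx hane
    rw [List.toFinset_cons, Finset.sum_insert (by
      intro hmem
      exact haW (List.mem_toFinset.1 hmem))]
    rw [diamP_eq]
    omega

lemma partD {𝒜 : Finset (Finset ℕ)} (hconn : clusterConn 𝒜) (hA : 𝒜.Nonempty)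
    (hne : ∀ A ∈ 𝒜, A.Nonempty) : diamP (𝒜.sup id) ≤ ∑ A ∈ 𝒜, diamP A := by
  obtain ⟨A₁, hA₁⟩ := hA
  have hU : (𝒜.sup id).Nonempty := by
    obtain ⟨a, ha⟩ := hne A₁ hA₁
    exact ⟨a, Finset.mem_sup.2 ⟨A₁, hA₁, ha⟩⟩
  set U := 𝒜.sup id with hUdef
  have hMxU : Mx U ∈ U := by
    have h2 : (U.max' hU : WithBot ℕ) = U.max := Finset.coe_max' hU
    rw [Mx, ← h2]
    simpa using U.max'_mem hU
  have hMnU : Mn U ∈ U := by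
    have h2 : (U.min' hU : WithTop ℕ) = U.min := Finset.coe_min' hU
    rw [Mn, ← h2]
    exact U.min'_mem hU
  obtain ⟨AM, hAM, hMxAM⟩ := Finset.mem_sup.1 hMxU
  obtain ⟨Am, hAm, hMnAm⟩ := Finset.mem_sup.1 hMnU
  obtain ⟨W⟩ := Gc_reachable hconn hAm hAM
  set p := W.toPath with hp
  have hnodup : p.1.support.Nodup := p.2.support_nodup
  have htele := walk_tele hne p.1 hAm hnodup
  have hsub : p.1.support.toFinset ⊆ 𝒜 := by
    intro Z hZ
    exact walk_support_mem p.1 hAm Z (List.mem_toFinset.1 hZ)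
  have hsum : ∑ Z ∈ p.1.support.toFinset, diamP Z ≤ ∑ A ∈ 𝒜, diamP A :=
    Finset.sum_le_sum_of_subset hsub
  have h5 : Mx U ≤ Mx AM := mem_le_Mx (id hMxAM : Mx U ∈ id AM)
  have h6 : Mn Am ≤ Mn U := Mn_le_mem (id hMnAm : Mn U ∈ id Am)
  have h7 : Mn U ≤ Mx U := Mn_le_Mx hU
  rw [diamP_eq]
  omega

lemma sum_le_prod_of_two_le {𝒜 : Finset (Finset ℕ)} (f : Finset ℕ → ℕ)
    (h : ∀ A ∈ 𝒜, 2 ≤ f A) (hA : 𝒜.Nonempty) : ∑ A ∈ 𝒜, f A ≤ ∏ A ∈ 𝒜, f A := by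
  induction hA using Finset.Nonempty.cons_induction with
  | singleton a => simp
  | cons a s ha hs ih =>
    rw [Finset.sum_cons, Finset.prod_cons]
    have hfa : 2 ≤ f a := h a (Finset.mem_cons_self a s)
    have hprod : 2 ≤ ∏ A ∈ s, f A := by
      obtain ⟨b, hb⟩ := hs
      calc 2 ≤ f b := h b (Finset.mem_cons.2 (Or.inr hb))
      _ ≤ ∏ A ∈ s, f A := Finset.single_le_prod' (fun c hc => by
          have := h c (Finset.mem_cons.2 (Or.inr hc)); omega) hb
    have hsum := ih (fun A hAs => h A (Finset.mem_cons.2 (Or.inr hAs)))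
    have := Nat.add_le_mul hfa hprod
    omega

/-- the pointwise product bound extracting the decay -/
lemma prod_extract {𝒜 : Finset (Finset ℕ)} {m : ℕ} {α : ℝ} (hα : 0 < α)
    (hconn : clusterConn 𝒜) (hA : 𝒜.Nonempty) (h2 : ∀ A ∈ 𝒜, 2 ≤ diamP A)
    (hm : m ≤ diamP (𝒜.sup id)) (wabs : Finset ℕ → ℝ) (hw : ∀ A, 0 ≤ wabs A) :
    ∏ A ∈ 𝒜, wabs A ≤ (2 / (1 + m : ℝ)) ^ α * ∏ A ∈ 𝒜, ((diamP A : ℝ) ^ α * wabs A) := by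
  have hne : ∀ A ∈ 𝒜, A.Nonempty := fun A hAm => nonempty_of_two_le_diamP (h2 A hAm)
  have hd : diamP (𝒜.sup id) ≤ ∏ A ∈ 𝒜, diamP A :=
    le_trans (partD hconn hA hne) (sum_le_prod_of_two_le _ h2 hA)
  have hprod2 : 2 ≤ ∏ A ∈ 𝒜, diamP A := by
    obtain ⟨b, hb⟩ := hA
    calc 2 ≤ diamP b := h2 b hb
    _ ≤ ∏ A ∈ 𝒜, diamP A := Finset.single_le_prod' (fun c hc => by
        have := h2 c hc; omega) hb
  have hkey : (1 + m : ℝ) ≤ 2 * (∏ A ∈ 𝒜, diamP A : ℕ) := by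
    have h1 : m ≤ ∏ A ∈ 𝒜, diamP A := le_trans hm hd
    push_cast
    have : (m : ℝ) ≤ (∏ A ∈ 𝒜, (diamP A : ℝ)) := by exact_mod_cast h1
    have h2' : (2 : ℝ) ≤ (∏ A ∈ 𝒜, (diamP A : ℝ)) := by exact_mod_cast hprod2
    nlinarith
  rw [Finset.prod_mul_distrib]
  have hrw : ∏ A ∈ 𝒜, (diamP A : ℝ) ^ α = (∏ A ∈ 𝒜, (diamP A : ℝ)) ^ α :=
    Real.finset_prod_rpow 𝒜 _ (fun A _ => Nat.cast_nonneg _) α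
  rw [hrw]
  have h1m : (0 : ℝ) < 1 + m := by positivity
  have hone : 1 ≤ (2 / (1 + m : ℝ)) ^ α * (∏ A ∈ 𝒜, (diamP A : ℝ)) ^ α := by
    rw [← Real.mul_rpow (by positivity) (Finset.prod_nonneg fun A _ => Nat.cast_nonneg _)]
    apply Real.one_le_rpow ?_ (le_of_lt hα)
    rw [div_mul_eq_mul_div, le_div_iff₀ h1m, one_mul]
    calc (1 + m : ℝ) ≤ 2 * (∏ A ∈ 𝒜, diamP A : ℕ) := hkey
    _ = 2 * ∏ A ∈ 𝒜, (diamP A : ℝ) := by push_cast; ring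
  calc ∏ A ∈ 𝒜, wabs A = 1 * ∏ A ∈ 𝒜, wabs A := (one_mul _).symm
  _ ≤ ((2 / (1 + m : ℝ)) ^ α * (∏ A ∈ 𝒜, (diamP A : ℝ)) ^ α) * ∏ A ∈ 𝒜, wabs A :=
      mul_le_mul_of_nonneg_right hone (Finset.prod_nonneg fun A _ => hw A)
  _ = (2 / (1 + m : ℝ)) ^ α * ((∏ A ∈ 𝒜, (diamP A : ℝ)) ^ α * ∏ A ∈ 𝒜, wabs A) := by ring
/-- Decay of cluster weights under the strengthened Kotecky–Preiss criterion
`∑_{A ∼ A'} e^{δ|A|} d(A)^α |w(A)| ≤ δ|A'|`, when all polymers with nonzero weight have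
diameter `> 1`: the truncated weights of clusters touching `A₀` and of diameter `≥ m`
sum to at most `C δ |A₀| (1+m)^{−α}`. -/
theorem cluster_weight_decay (α δ : ℝ) (hα : 0 < α) (hδ : 0 < δ)
    (w : Finset ℕ → ℂ)
    (hKP : ∀ A' : Finset ℕ,
      (∑' A : Finset ℕ, if adjP A A'
          then ENNReal.ofReal (Real.exp (δ * A.card) * (diamP A : ℝ) ^ α * ‖w A‖)
          else 0) ≤ ENNReal.ofReal (δ * A'.card))
    (hd : ∀ A : Finset ℕ, w A ≠ 0 → 1 < diamP A) :
    ∃ C : ℝ, 0 < C ∧ ∀ (A₀ : Finset ℕ) (m : ℕ),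
      (∑' 𝒜 : Finset (Finset ℕ),
          if clusterConn 𝒜 ∧ (∃ A ∈ 𝒜, adjP A A₀) ∧ m ≤ diamP (𝒜.sup id)
            then ENNReal.ofReal (‖truncWeight w 𝒜‖) else 0)
        ≤ ENNReal.ofReal (C * δ * A₀.card * (1 + m : ℝ) ^ (-α)) := by
  refine ⟨(2 : ℝ) ^ α, Real.rpow_pos_of_pos two_pos α, ?_⟩
  intro A₀ m
  set ψ : Finset ℕ → ℝ≥0∞ :=
    fun A => ENNReal.ofReal ((diamP A : ℝ) ^ α * ‖w A‖) with hψ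
  have hKP' : ∀ B' : Finset ℕ,
      (∑' A : Finset ℕ, if adjP A B'
        then ψ A * ENNReal.ofReal (Real.exp (δ * A.card)) else 0)
        ≤ ENNReal.ofReal (δ * B'.card) := by
    intro B'
    refine le_trans (le_of_eq ?_) (hKP B')
    apply tsum_congr
    intro A
    by_cases h : adjP A B'
    · rw [if_pos h, if_pos h, hψ]
      rw [← ENNReal.ofReal_mul (by positivity)]
      congr 1
      ring
    · rw [if_neg h, if_neg h]
  set κ : ℝ≥0∞ := ENNReal.ofReal ((2 / (1 + m : ℝ)) ^ α) with hκ
  set r0 : Finset (Finset ℕ) → Finset ℕ :=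
    fun 𝒜 => pick (𝒜.filter (fun A => adjP A A₀)) with hr0
  set g : Finset (Finset ℕ) → ℝ≥0∞ := fun 𝒜 =>
    if clusterConn 𝒜 ∧ (∃ A ∈ 𝒜, adjP A A₀)
      then ((Pcount 𝒜 (r0 𝒜)).card : ℝ≥0∞) * ∏ A ∈ 𝒜, ψ A else 0 with hg
  have hr0spec : ∀ 𝒜 : Finset (Finset ℕ), (∃ A ∈ 𝒜, adjP A A₀) →
      r0 𝒜 ∈ 𝒜 ∧ adjP (r0 𝒜) A₀ := by
    intro 𝒜 hA
    obtain ⟨A, hAm, hAadj⟩ := hA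
    have hne : (𝒜.filter (fun A => adjP A A₀)).Nonempty :=
      ⟨A, Finset.mem_filter.2 ⟨hAm, hAadj⟩⟩
    have := pick_mem hne
    rw [Finset.mem_filter] at this
    exact this
  have hpoint : ∀ 𝒜 : Finset (Finset ℕ),
      (if clusterConn 𝒜 ∧ (∃ A ∈ 𝒜, adjP A A₀) ∧ m ≤ diamP (𝒜.sup id)
        then ENNReal.ofReal (‖truncWeight w 𝒜‖) else 0) ≤ κ * g 𝒜 := by
    intro 𝒜
    by_cases hcond : clusterConn 𝒜 ∧ (∃ A ∈ 𝒜, adjP A A₀) ∧ m ≤ diamP (𝒜.sup id)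
    · rw [if_pos hcond]
      obtain ⟨hconn, htouch, hm⟩ := hcond
      rw [hg]
      simp only [if_pos (⟨hconn, htouch⟩ : clusterConn 𝒜 ∧ (∃ A ∈ 𝒜, adjP A A₀))]
      by_cases h0 : ∃ A ∈ 𝒜, w A = 0
      · obtain ⟨A, hAm, hA0⟩ := h0
        have : truncWeight w 𝒜 = 0 := by
          rw [truncWeight_eq]
          rw [Finset.prod_eq_zero hAm hA0, mul_zero]
        rw [this]
        simp
      · push_neg at h0
        have h2 : ∀ A ∈ 𝒜, 2 ≤ diamP A := fun A hAm => hd A (h0 A hAm)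
        have hAne : 𝒜.Nonempty := by
          obtain ⟨A, hAm, -⟩ := htouch
          exact ⟨A, hAm⟩
        obtain ⟨hr𝒜, hradj⟩ := hr0spec 𝒜 htouch
        have hA : ‖truncWeight w 𝒜‖ ≤
            ((Pcount 𝒜 (r0 𝒜)).card : ℝ) * ∏ A ∈ 𝒜, ‖w A‖ := partA w hr𝒜
        have hB : ∏ A ∈ 𝒜, ‖w A‖ ≤
            (2 / (1 + m : ℝ)) ^ α * ∏ A ∈ 𝒜, ((diamP A : ℝ) ^ α * ‖w A‖) :=
          prod_extract hα hconn hAne h2 hm _ (fun A => norm_nonneg _)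
        have hC : ‖truncWeight w 𝒜‖ ≤ ((Pcount 𝒜 (r0 𝒜)).card : ℝ) *
            ((2 / (1 + m : ℝ)) ^ α * ∏ A ∈ 𝒜, ((diamP A : ℝ) ^ α * ‖w A‖)) :=
          le_trans hA (mul_le_mul_of_nonneg_left hB (Nat.cast_nonneg _))
        calc ENNReal.ofReal (‖truncWeight w 𝒜‖)
            ≤ ENNReal.ofReal (((Pcount 𝒜 (r0 𝒜)).card : ℝ) *
              ((2 / (1 + m : ℝ)) ^ α * ∏ A ∈ 𝒜, ((diamP A : ℝ) ^ α * ‖w A‖))) :=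
              ENNReal.ofReal_le_ofReal hC
        _ = ((Pcount 𝒜 (r0 𝒜)).card : ℝ≥0∞) * (κ *
              ENNReal.ofReal (∏ A ∈ 𝒜, ((diamP A : ℝ) ^ α * ‖w A‖))) := by
              rw [ENNReal.ofReal_mul (Nat.cast_nonneg _),
                ENNReal.ofReal_mul (by positivity), ENNReal.ofReal_natCast, hκ]
        _ = κ * (((Pcount 𝒜 (r0 𝒜)).card : ℝ≥0∞) * ∏ A ∈ 𝒜, ψ A) := by
              rw [hψ]
              rw [ENNReal.ofReal_prod_of_nonneg (fun A _ => by positivity)]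
              ring
    · rw [if_neg hcond]
      exact zero_le
  calc (∑' 𝒜 : Finset (Finset ℕ),
          if clusterConn 𝒜 ∧ (∃ A ∈ 𝒜, adjP A A₀) ∧ m ≤ diamP (𝒜.sup id)
            then ENNReal.ofReal (‖truncWeight w 𝒜‖) else 0)
      ≤ ∑' 𝒜 : Finset (Finset ℕ), κ * g 𝒜 := ENNReal.tsum_le_tsum hpoint
  _ = κ * ∑' 𝒜 : Finset (Finset ℕ), g 𝒜 := ENNReal.tsum_mul_left
  _ ≤ κ * ∑' rp : TI, GG ψ A₀ rp := by
      apply mul_le_mul_right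
      apply tsum_le_tsum_fiber g (GG ψ A₀) (fun rp : TI => VT rp.1 rp.2)
      intro 𝒜
      by_cases hcond : clusterConn 𝒜 ∧ (∃ A ∈ 𝒜, adjP A A₀)
      · simp only [hg]
        rw [if_pos hcond]
        obtain ⟨hr𝒜, hradj⟩ := hr0spec 𝒜 hcond.2
        have hmem : ∀ P ∈ Pcount 𝒜 (r0 𝒜), VT (r0 𝒜) P = 𝒜 :=
          fun P hP => (Finset.mem_filter.1 hP).2.2
        have hsum := sum_le_tsum_of_inj (Pcount 𝒜 (r0 𝒜)).attach
          (fun P => (⟨((r0 𝒜 : Finset ℕ), P.1), hmem P.1 P.2⟩ : {rp : TI // VT rp.1 rp.2 = 𝒜}))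
          (by
            intro P1 _ P2 _ h
            exact Subtype.ext (congrArg (fun x : {rp : TI // VT rp.1 rp.2 = 𝒜} => x.1.2) h))
          (fun x => GG ψ A₀ x.1)
        refine le_trans (le_of_eq ?_) hsum
        have heval : ∀ P ∈ (Pcount 𝒜 (r0 𝒜)).attach,
            GG ψ A₀ ((r0 𝒜 : Finset ℕ), P.1) = ∏ A ∈ 𝒜, ψ A := by
          intro P _
          have hPc := Finset.mem_filter.1 P.2
          rw [GG, if_pos (⟨hPc.2.1, hradj⟩ : RT (r0 𝒜) P.1 ∧ adjP (r0 𝒜) A₀)]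
          rw [hPc.2.2]
        rw [Finset.sum_congr rfl heval, Finset.sum_const, nsmul_eq_mul, Finset.card_attach]
      · simp only [hg]
        rw [if_neg hcond]
        exact zero_le
  _ ≤ κ * ENNReal.ofReal (δ * A₀.card) := mul_le_mul_right (partB ψ hδ hKP' A₀) κ
  _ = ENNReal.ofReal ((2 : ℝ) ^ α * δ * A₀.card * (1 + m : ℝ) ^ (-α)) := by
      rw [hκ, ← ENNReal.ofReal_mul (by positivity)]
      congr 1
      have h1m : (0 : ℝ) < 1 + m := by positivity
      rw [Real.div_rpow (by norm_num) (le_of_lt h1m), Real.rpow_neg (le_of_lt h1m)]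
      field_simp
end
end

section
/- Let h ∈ L¹(ℝ₊) and λ > 0, and for macroscopic times τ < τ' in ℕ define the edge factor ê(τ,τ') := ∫_{λ^{−2}[τ−1,τ]} du ∫_{λ^{−2}[τ'−1,τ']} dv · λ² C |h(v−u)|. If ∫₀^∞ (1+s)^α |h(s)| ds ≤ C₁ for some α > 0, then with ê_α(τ,τ') := (1 + |τ'−τ|)^α ê(τ,τ'), one has for every τ: ∑_{τ' ≠ τ} ê_α(τ,τ') ≤ C₂ · λ^{2 min(α,1)}, where C₂ depends only on C, C₁, α. -/
open MeasureTheory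
open scoped ENNReal

noncomputable section

private lemma ofReal_integral_le {μ : Measure ℝ} {f : ℝ → ℝ} (hf : ∀ x, 0 ≤ f x) :
    ENNReal.ofReal (∫ x, f x ∂μ) ≤ ∫⁻ x, ENNReal.ofReal (f x) ∂μ := by
  by_cases hint : Integrable f μ
  · rw [ofReal_integral_eq_lintegral_ofReal hint (Filter.Eventually.of_forall hf)]
  · rw [integral_undef hint]; simp

private lemma fubini_bound (h : ℝ → ℂ) (hm : Measurable h) (c : ℝ) (hc : 0 ≤ c)
    (a₁ a₂ b₁ b₂ : ℝ) :
    ENNReal.ofReal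
        (∫ u in Set.Icc a₁ a₂, ∫ v in Set.Icc b₁ b₂, c * ‖h (v - u)‖) ≤
      ENNReal.ofReal c *
        ∫⁻ s, ENNReal.ofReal (‖h s‖) *
          volume (Set.Icc a₁ a₂ ∩ Set.Icc (b₁ - s) (b₂ - s)) := by
  set f : ℝ → ℝ≥0∞ := fun s => ENNReal.ofReal (‖h s‖) with hfdef
  have hfm : Measurable f :=
    ENNReal.measurable_ofReal.comp (continuous_norm.measurable.comp hm)
  set A := Set.Icc a₁ a₂
  set B := Set.Icc b₁ b₂
  have hA : MeasurableSet A := measurableSet_Icc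
  have hB : MeasurableSet B := measurableSet_Icc
  -- step 1: pass to lintegrals
  have step1 : ENNReal.ofReal
      (∫ u in A, ∫ v in B, c * ‖h (v - u)‖) ≤
      ∫⁻ u in A, ∫⁻ v in B, ENNReal.ofReal c * f (v - u) := by
    refine le_trans (ofReal_integral_le fun u => integral_nonneg fun v =>
      mul_nonneg hc (norm_nonneg _)) ?_
    refine lintegral_mono fun u => ?_
    refine le_trans (ofReal_integral_le fun v => mul_nonneg hc (norm_nonneg _)) ?_
    refine lintegral_mono fun v => ?_
    rw [ENNReal.ofReal_mul hc]
  refine le_trans step1 ?_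
  -- pull out the constant
  have step2 : (∫⁻ u in A, ∫⁻ v in B, ENNReal.ofReal c * f (v - u)) =
      ENNReal.ofReal c * ∫⁻ u in A, ∫⁻ v in B, f (v - u) := by
    rw [← lintegral_const_mul' _ _ ENNReal.ofReal_ne_top]
    exact lintegral_congr fun u => lintegral_const_mul' _ _ ENNReal.ofReal_ne_top
  rw [step2]
  refine mul_le_mul_right ?_ _
  -- inner translation
  have inner : ∀ u : ℝ, (∫⁻ v in B, f (v - u)) =
      ∫⁻ s, B.indicator (1 : ℝ → ℝ≥0∞) (s + u) * f s := by
    intro u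
    rw [← lintegral_indicator hB]
    rw [← lintegral_add_right_eq_self (B.indicator fun v => f (v - u)) u]
    refine lintegral_congr fun s => ?_
    by_cases hs : s + u ∈ B
    · simp [Set.indicator_of_mem hs]
    · simp [Set.indicator_of_notMem hs]
  calc (∫⁻ u in A, ∫⁻ v in B, f (v - u))
      = ∫⁻ u, ∫⁻ s, f s * (A.indicator 1 u * B.indicator 1 (s + u)) := by
        rw [← lintegral_indicator hA]
        refine lintegral_congr fun u => ?_
        by_cases hu : u ∈ A
        · rw [Set.indicator_of_mem hu, inner u]
          refine lintegral_congr fun s => ?_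
          simp [Set.indicator_of_mem hu, mul_comm]
        · simp [Set.indicator_of_notMem hu]
    _ = ∫⁻ s, ∫⁻ u, f s * (A.indicator 1 u * B.indicator 1 (s + u)) := by
        refine lintegral_lintegral_swap ?_
        refine Measurable.aemeasurable ?_
        refine Measurable.mul (hfm.comp measurable_snd) ?_
        refine Measurable.mul ?_ ?_
        · exact (measurable_const.indicator hA).comp measurable_fst
        · exact (measurable_const.indicator hB).comp (measurable_snd.add measurable_fst)
    _ ≤ ∫⁻ s, f s * volume (A ∩ Set.Icc (b₁ - s) (b₂ - s)) := by
        refine lintegral_mono fun s => ?_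
        rw [lintegral_const_mul' _ _ ENNReal.ofReal_ne_top]
        refine mul_le_mul_right (le_of_eq ?_) _
        have : ∀ u : ℝ, A.indicator (1 : ℝ → ℝ≥0∞) u * B.indicator 1 (s + u) =
            (A ∩ Set.Icc (b₁ - s) (b₂ - s)).indicator 1 u := by
          intro u
          have hmem : s + u ∈ B ↔ u ∈ Set.Icc (b₁ - s) (b₂ - s) := by
            simp only [B, Set.mem_Icc]
            constructor <;> intro hh <;> constructor <;> linarith [hh.1, hh.2]
          by_cases hu : u ∈ A <;> by_cases hv : u ∈ Set.Icc (b₁ - s) (b₂ - s) <;>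
            simp_all [Set.indicator_of_mem, Set.indicator_of_notMem, Set.mem_inter_iff]
        simp_rw [this]
        exact lintegral_indicator_one (hA.inter measurableSet_Icc)

private lemma real_bound {α lam : ℝ} (hα : 0 < α) (hl : 0 < lam) (hl1 : lam ≤ 1)
    (D : ℕ) (hD : 1 ≤ D) {s : ℝ} (hs1 : ((D : ℝ) - 1) / lam ^ 2 ≤ s)
    (hs2 : s ≤ ((D : ℝ) + 1) / lam ^ 2) :
    (1 + (D : ℝ)) ^ α * (lam ^ 2 * (if D = 1 then s else 1 / lam ^ 2)) ≤
      (2 ^ (α + 1) + 3 ^ α) * lam ^ (2 * min α 1) * (1 + s) ^ α := by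
  have hL2 : (0:ℝ) < lam ^ 2 := by positivity
  have hD1 : (1:ℝ) ≤ (D:ℝ) := by exact_mod_cast hD
  have hs0 : 0 ≤ s := le_trans (div_nonneg (by linarith) hL2.le) hs1
  have h1s : (1:ℝ) ≤ 1 + s := by linarith
  have hnpow : lam ^ 2 = lam ^ ((2:ℕ):ℝ) := (Real.rpow_natCast lam 2).symm
  have h2cast : ((2:ℕ):ℝ) = (2:ℝ) := by norm_num
  have hKpos : (0:ℝ) < 2 ^ (α + 1) + 3 ^ α := by positivity
  have h3pos : (0:ℝ) < 3 ^ α := Real.rpow_pos_of_pos (by norm_num) _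
  have h2apos : (0:ℝ) < 2 ^ α := Real.rpow_pos_of_pos (by norm_num) _
  have hlam2α : (lam ^ 2) ^ α = lam ^ (2 * α) := by
    rw [hnpow, ← Real.rpow_mul hl.le, h2cast]
  have hrsA : (1+s)^α ≥ 0 := Real.rpow_nonneg (by linarith) _
  by_cases hD1' : D = 1
  · -- D = 1
    subst hD1'
    rw [if_pos rfl]
    simp only [Nat.cast_one] at *
    have hs2' : s ≤ 2 / lam ^ 2 := by
      have : ((1:ℝ) + 1) / lam ^ 2 = 2 / lam ^ 2 := by norm_num
      linarith [hs2, this ▸ hs2]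
    have h2α : (1 + (1:ℝ)) ^ α = 2 ^ α := by norm_num
    rw [h2α]
    by_cases hα1 : 1 ≤ α
    · -- β = 1
      have hβ : min α 1 = 1 := min_eq_right hα1
      rw [hβ, mul_one]
      have e1 : s ≤ (1+s)^α := by
        calc s ≤ 1 + s := by linarith
        _ = (1+s)^(1:ℝ) := (Real.rpow_one _).symm
        _ ≤ (1+s)^α := Real.rpow_le_rpow_of_exponent_le h1s hα1
      have e2 : lam ^ ((2:ℝ)) = lam ^ 2 := by rw [hnpow, h2cast]
      rw [e2]
      have e3 : (2:ℝ)^α ≤ 2^(α+1) := Real.rpow_le_rpow_of_exponent_le (by norm_num) (by linarith)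
      calc 2^α * (lam^2 * s) ≤ 2^α * (lam^2 * (1+s)^α) :=
            mul_le_mul_of_nonneg_left (mul_le_mul_of_nonneg_left e1 hL2.le) h2apos.le
        _ = (2^α * lam^2) * (1+s)^α := by ring
        _ ≤ ((2^(α+1)+3^α) * lam^2) * (1+s)^α := by
            refine mul_le_mul_of_nonneg_right (mul_le_mul_of_nonneg_right ?_ hL2.le) hrsA
            linarith
        _ = (2^(α+1)+3^α) * lam^2 * (1+s)^α := by ring
    · -- β = α < 1
      push_neg at hα1
      have hβ : min α 1 = α := min_eq_left hα1.le
      rw [hβ]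
      have key : lam ^ 2 * s ≤ 2^(1-α) * lam ^ (2*α) * (1+s)^α := by
        rcases eq_or_lt_of_le hs0 with h0 | hspos
        · rw [← h0, mul_zero]; positivity
        · have e1 : s ^ (1-α) ≤ (2/lam^2) ^ (1-α) :=
            Real.rpow_le_rpow hs0 hs2' (by linarith)
          have e2 : s ^ α ≤ (1+s) ^ α := Real.rpow_le_rpow hs0 (by linarith) hα.le
          have e3 : s = s ^ α * s ^ (1-α) := by
            rw [← Real.rpow_add hspos]; ring_nf; rw [Real.rpow_one]
          have e4 : (2/lam^2 : ℝ) ^ (1-α) = 2^(1-α) / (lam^2)^(1-α) :=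
            Real.div_rpow (by norm_num) hL2.le (1-α)
          have e6 : (0:ℝ) < (lam^2)^(1-α) := Real.rpow_pos_of_pos hL2 _
          have e5 : lam ^ 2 / (lam^2)^(1-α) = (lam^2) ^ α := by
            have hexp : α + (1-α) = 1 := by ring
            rw [div_eq_iff (ne_of_gt e6), ← Real.rpow_add hL2, hexp, Real.rpow_one]
          calc lam ^ 2 * s = lam^2 * (s ^ α * s ^ (1-α)) := by rw [← e3]
            _ ≤ lam^2 * ((1+s)^α * (2^(1-α)/(lam^2)^(1-α))) := by
                refine mul_le_mul_of_nonneg_left ?_ hL2.le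
                refine mul_le_mul e2 (e4 ▸ e1) (Real.rpow_nonneg hs0 _) hrsA
            _ = (lam^2 / (lam^2)^(1-α)) * 2^(1-α) * (1+s)^α := by ring
            _ = 2^(1-α) * lam ^ (2*α) * (1+s)^α := by rw [e5, hlam2α]; ring
      have e7 : (2:ℝ)^α * 2^(1-α) = 2 := by
        rw [← Real.rpow_add (by norm_num)]; norm_num
      have e8 : (2:ℝ) ≤ 2^(α+1) := by
        calc (2:ℝ) = 2^(1:ℝ) := (Real.rpow_one _).symm
        _ ≤ 2^(α+1) := Real.rpow_le_rpow_of_exponent_le (by norm_num) (by linarith)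
      have hlr : (0:ℝ) ≤ lam ^ (2*α) := Real.rpow_nonneg hl.le _
      calc 2^α * (lam^2 * s) ≤ 2^α * (2^(1-α) * lam ^ (2*α) * (1+s)^α) :=
            mul_le_mul_of_nonneg_left key h2apos.le
        _ = 2 * lam^(2*α) * (1+s)^α := by rw [← mul_assoc, ← mul_assoc, e7]
        _ ≤ (2^(α+1) + 3^α) * lam^(2*α) * (1+s)^α := by
            refine mul_le_mul_of_nonneg_right (mul_le_mul_of_nonneg_right ?_ hlr) hrsA
            linarith
  · -- D ≥ 2
    have hD2 : 2 ≤ D := by omega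
    have hD2' : (2:ℝ) ≤ (D:ℝ) := by exact_mod_cast hD2
    rw [if_neg hD1']
    set t : ℝ := (D:ℝ) - 1 with ht
    have ht1 : (1:ℝ) ≤ t := by simp only [ht]; linarith
    have ht0 : (0:ℝ) ≤ t := by linarith
    have hβα : min α 1 ≤ α := min_le_left _ _
    have hβ0 : 0 < min α 1 := lt_min hα one_pos
    -- (1+s)^α ≥ (t/λ²)^α
    have e1 : (t/lam^2) ^ α ≤ (1+s)^α := by
      refine Real.rpow_le_rpow (by positivity) ?_ hα.le
      have : t / lam^2 ≤ s := hs1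
      linarith
    have e2 : (t/lam^2 : ℝ)^α = t^α / (lam^2)^α := Real.div_rpow ht0 hL2.le α
    -- λ^{2β} / (λ²)^α = λ^{2β-2α} ≥ 1
    have e3 : (1:ℝ) ≤ lam ^ (2 * min α 1) / (lam^2)^α := by
      rw [hlam2α, ← Real.rpow_sub hl]
      calc (1:ℝ) = lam ^ (0:ℝ) := (Real.rpow_zero _).symm
      _ ≤ lam ^ (2 * min α 1 - 2*α) :=
          Real.rpow_le_rpow_of_exponent_ge hl hl1 (by nlinarith)
    -- (1+D)^α ≤ 3^α t^α
    have e4 : (1 + (D:ℝ))^α ≤ 3^α * t^α := by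
      rw [← Real.mul_rpow (by norm_num) ht0]
      exact Real.rpow_le_rpow (by linarith) (by simp only [ht]; linarith) hα.le
    have htα : (0:ℝ) ≤ t ^ α := Real.rpow_nonneg ht0 _
    have hlβ : (0:ℝ) < lam ^ (2 * min α 1) := Real.rpow_pos_of_pos hl _
    have hl2α : (0:ℝ) < (lam^2)^α := Real.rpow_pos_of_pos hL2 _
    have e5 : t^α ≤ lam ^ (2 * min α 1) * (1+s)^α := by
      calc t^α = 1 * t^α := (one_mul _).symm
      _ ≤ (lam ^ (2*min α 1) / (lam^2)^α) * t^α := mul_le_mul_of_nonneg_right e3 htα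
      _ = lam ^ (2*min α 1) * (t^α / (lam^2)^α) := by ring
      _ = lam ^ (2*min α 1) * (t/lam^2)^α := by rw [e2]
      _ ≤ lam ^ (2*min α 1) * (1+s)^α := mul_le_mul_of_nonneg_left e1 hlβ.le
    have main : (1 + (D:ℝ))^α ≤ (2^(α+1)+3^α) * lam ^ (2*min α 1) * (1+s)^α := by
      calc (1 + (D:ℝ))^α ≤ 3^α * t^α := e4
      _ ≤ 3^α * (lam ^ (2*min α 1) * (1+s)^α) := mul_le_mul_of_nonneg_left e5 h3pos.le
      _ ≤ (2^(α+1)+3^α) * (lam ^ (2*min α 1) * (1+s)^α) := by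
          refine mul_le_mul_of_nonneg_right ?_ (by positivity)
          have : (0:ℝ) < 2^(α+1) := Real.rpow_pos_of_pos (by norm_num) _
          linarith
      _ = (2^(α+1)+3^α) * lam ^ (2*min α 1) * (1+s)^α := by ring
    have : lam ^ 2 * (1 / lam^2) = 1 := by field_simp
    rw [this, mul_one]
    exact main

private lemma W_le {a₁ a₂ b₁ b₂ s w : ℝ}
    (hw : min a₂ (b₂ - s) - max a₁ (b₁ - s) ≤ w) :
    volume (Set.Icc a₁ a₂ ∩ Set.Icc (b₁ - s) (b₂ - s)) ≤ ENNReal.ofReal w := by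
  rw [Set.Icc_inter_Icc, Real.volume_Icc]
  exact ENNReal.ofReal_le_ofReal hw

private lemma pointwise_bound {α C lam : ℝ} (hα : 0 < α) (hC : 0 ≤ C) (hl : 0 < lam)
    (hl1 : lam ≤ 1) (σ D : ℕ) (hD : 1 ≤ D) (s : ℝ) :
    ENNReal.ofReal ((1 + (D : ℝ)) ^ α) * ENNReal.ofReal (lam ^ 2 * C) *
        volume (Set.Icc (((σ : ℝ) - 1) / lam ^ 2) ((σ : ℝ) / lam ^ 2) ∩
          Set.Icc ((((σ + D : ℕ) : ℝ) - 1) / lam ^ 2 - s) ((((σ + D : ℕ) : ℝ)) / lam ^ 2 - s)) ≤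
      ENNReal.ofReal ((2 ^ (α + 1) + 3 ^ α) * C * lam ^ (2 * min α 1)) *
        (ENNReal.ofReal ((1 + s) ^ α) *
          (Set.Icc (((D : ℝ) - 1) / lam ^ 2) (((D : ℝ) + 1) / lam ^ 2)).indicator 1 s) := by
  have hL2 : (0 : ℝ) < lam ^ 2 := by positivity
  have hcast : (((σ + D : ℕ) : ℝ)) = (σ : ℝ) + (D : ℝ) := by push_cast; ring
  rw [hcast]
  have hrpnn : (0:ℝ) ≤ (1 + (D:ℝ)) ^ α := Real.rpow_nonneg (by positivity) _
  by_cases hmem : s ∈ Set.Icc (((D : ℝ) - 1) / lam ^ 2) (((D : ℝ) + 1) / lam ^ 2)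
  · obtain ⟨hs1, hs2⟩ := Set.mem_Icc.mp hmem
    rw [Set.indicator_of_mem hmem, Pi.one_apply, mul_one]
    set w : ℝ := if D = 1 then s else 1 / lam ^ 2 with hwdef
    have hDr1 : (1:ℝ) ≤ (D:ℝ) := by exact_mod_cast hD
    have hs0 : 0 ≤ s := le_trans (div_nonneg (by linarith) hL2.le) hs1
    have hw0 : 0 ≤ w := by
      rw [hwdef]; split
      · exact hs0
      · positivity
    have hW : volume (Set.Icc (((σ : ℝ) - 1) / lam ^ 2) ((σ : ℝ) / lam ^ 2) ∩
        Set.Icc (((σ : ℝ) + (D : ℝ) - 1) / lam ^ 2 - s) (((σ : ℝ) + (D : ℝ)) / lam ^ 2 - s)) ≤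
        ENNReal.ofReal w := by
      refine W_le ?_
      rw [hwdef]; split
      · rename_i hD1
        have hDr : (D : ℝ) = 1 := by rw [hD1]; norm_num
        have key : (σ:ℝ)/lam^2 - (((σ:ℝ) + (D:ℝ) - 1)/lam^2 - s) = s - ((D:ℝ)-1)/lam^2 := by
          ring
        have h1 : min ((σ:ℝ)/lam^2) (((σ:ℝ)+(D:ℝ))/lam^2 - s) ≤ (σ:ℝ)/lam^2 := min_le_left _ _
        have h2 : ((σ:ℝ)+(D:ℝ)-1)/lam^2 - s ≤ max (((σ:ℝ)-1)/lam^2) (((σ:ℝ)+(D:ℝ)-1)/lam^2 - s) :=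
          le_max_right _ _
        have hz : ((D:ℝ)-1)/lam^2 = 0 := by rw [hDr]; simp
        linarith [key, hz]
      · have key : (σ:ℝ)/lam^2 - ((σ:ℝ)-1)/lam^2 = 1/lam^2 := by ring
        have h1 : min ((σ:ℝ)/lam^2) (((σ:ℝ)+(D:ℝ))/lam^2 - s) ≤ (σ:ℝ)/lam^2 := min_le_left _ _
        have h2 : ((σ:ℝ)-1)/lam^2 ≤ max (((σ:ℝ)-1)/lam^2) (((σ:ℝ)+(D:ℝ)-1)/lam^2 - s) :=
          le_max_left _ _
        linarith
    calc ENNReal.ofReal ((1 + (D:ℝ))^α) * ENNReal.ofReal (lam^2 * C) * volume _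
        ≤ ENNReal.ofReal ((1 + (D:ℝ))^α) * ENNReal.ofReal (lam^2 * C) * ENNReal.ofReal w :=
          mul_le_mul_right hW _
      _ = ENNReal.ofReal ((1 + (D:ℝ))^α * (lam^2 * C) * w) := by
          rw [← ENNReal.ofReal_mul hrpnn, ← ENNReal.ofReal_mul (mul_nonneg hrpnn (by positivity))]
      _ ≤ ENNReal.ofReal ((2^(α+1) + 3^α) * C * lam ^ (2 * min α 1) * (1+s)^α) := by
          refine ENNReal.ofReal_le_ofReal ?_
          have hr := real_bound hα hl hl1 D hD hs1 hs2
          calc (1 + (D:ℝ))^α * (lam^2 * C) * w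
              = C * ((1 + (D:ℝ))^α * (lam^2 * w)) := by ring
            _ ≤ C * ((2^(α+1) + 3^α) * lam ^ (2 * min α 1) * (1+s)^α) :=
                mul_le_mul_of_nonneg_left hr hC
            _ = (2^(α+1) + 3^α) * C * lam ^ (2 * min α 1) * (1+s)^α := by ring
      _ = ENNReal.ofReal ((2^(α+1) + 3^α) * C * lam ^ (2 * min α 1)) *
            ENNReal.ofReal ((1+s)^α) := by
          rw [← ENNReal.ofReal_mul]
          have h2p : (0:ℝ) ≤ 2^(α+1) + 3^α := by positivity
          positivity
  · rw [Set.indicator_of_notMem hmem]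
    have hv : volume (Set.Icc (((σ : ℝ) - 1) / lam ^ 2) ((σ : ℝ) / lam ^ 2) ∩
        Set.Icc (((σ : ℝ) + (D : ℝ) - 1) / lam ^ 2 - s) (((σ : ℝ) + (D : ℝ)) / lam ^ 2 - s)) = 0 := by
      rw [Set.mem_Icc, not_and_or] at hmem
      refine le_antisymm ?_ (zero_le)
      rcases hmem with hlt | hlt
      · push_neg at hlt
        refine le_trans (W_le (w := s - ((D:ℝ)-1)/lam^2) ?_) ?_
        · have h1 : min ((σ:ℝ)/lam^2) (((σ:ℝ)+(D:ℝ))/lam^2 - s) ≤ (σ:ℝ)/lam^2 := min_le_left _ _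
          have h2 : ((σ:ℝ)+(D:ℝ)-1)/lam^2 - s ≤
              max (((σ:ℝ)-1)/lam^2) (((σ:ℝ)+(D:ℝ)-1)/lam^2 - s) := le_max_right _ _
          have key : (σ:ℝ)/lam^2 - (((σ:ℝ)+(D:ℝ)-1)/lam^2 - s) = s - ((D:ℝ)-1)/lam^2 := by ring
          linarith
        · simp only [ENNReal.ofReal_eq_zero, nonpos_iff_eq_zero]
          linarith
      · push_neg at hlt
        refine le_trans (W_le (w := ((D:ℝ)+1)/lam^2 - s) ?_) ?_
        · have h1 : min ((σ:ℝ)/lam^2) (((σ:ℝ)+(D:ℝ))/lam^2 - s) ≤ ((σ:ℝ)+(D:ℝ))/lam^2 - s :=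
            min_le_right _ _
          have h2 : ((σ:ℝ)-1)/lam^2 ≤
              max (((σ:ℝ)-1)/lam^2) (((σ:ℝ)+(D:ℝ)-1)/lam^2 - s) := le_max_left _ _
          have key : ((σ:ℝ)+(D:ℝ))/lam^2 - s - ((σ:ℝ)-1)/lam^2 = ((D:ℝ)+1)/lam^2 - s := by ring
          linarith
        · rw [nonpos_iff_eq_zero, ENNReal.ofReal_eq_zero]
          linarith
    rw [hv, mul_zero, mul_zero]
    exact zero_le

/-- The edge factor `ê(τ,τ') = ∫_{λ⁻²[σ-1,σ]} du ∫_{λ⁻²[σ'-1,σ']} dv λ²C|h(v-u)|`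
with `σ = min τ τ'`, `σ' = max τ τ'`. -/
def ehat (C lam : ℝ) (h : ℝ → ℂ) (τ τ' : ℕ) : ℝ :=
  ∫ u in Set.Icc (((min τ τ' : ℕ) - 1 : ℝ) / lam ^ 2) (((min τ τ' : ℕ) : ℝ) / lam ^ 2),
    ∫ v in Set.Icc (((max τ τ' : ℕ) - 1 : ℝ) / lam ^ 2) (((max τ τ' : ℕ) : ℝ) / lam ^ 2),
      lam ^ 2 * C * ‖h (v - u)‖

private lemma single_bound {α C lam : ℝ} (hα : 0 < α) (hC : 0 ≤ C) (hl : 0 < lam)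
    (hl1 : lam ≤ 1) (h : ℝ → ℂ) (hm : Measurable h) (τ τ' : ℕ) (hτ : 1 ≤ τ) (hτ' : 1 ≤ τ')
    (hne : τ' ≠ τ) :
    ENNReal.ofReal ((1 + ((max τ τ' - min τ τ' : ℕ) : ℝ)) ^ α * ehat C lam h τ τ') ≤
      ENNReal.ofReal ((2 ^ (α + 1) + 3 ^ α) * C * lam ^ (2 * min α 1)) *
        ∫⁻ s, ENNReal.ofReal ((1 + s) ^ α * ‖h s‖) *
          (Set.Icc ((((max τ τ' - min τ τ' : ℕ) : ℝ) - 1) / lam ^ 2)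
            ((((max τ τ' - min τ τ' : ℕ) : ℝ) + 1) / lam ^ 2)).indicator 1 s := by
  have hL2C : (0:ℝ) ≤ lam ^ 2 * C := mul_nonneg (by positivity) hC
  set σ := min τ τ' with hσ
  set σ' := max τ τ' with hσ'
  set D := σ' - σ with hDdef
  have hσσ' : σ + D = σ' := by omega
  have hD1 : 1 ≤ D := by omega
  have hσ1 : 1 ≤ σ := by omega
  unfold ehat
  rw [← hσ, ← hσ', ← hσσ']
  have hrpnn : (0:ℝ) ≤ (1 + (D:ℝ)) ^ α := Real.rpow_nonneg (by positivity) _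
  have hfg : ∀ s : ℝ, ENNReal.ofReal ((1+s)^α) * ENNReal.ofReal (‖h s‖) ≤
      ENNReal.ofReal ((1+s)^α * ‖h s‖) := by
    intro s
    rcases le_or_gt 0 ((1+s)^α) with hx | hx
    · rw [ENNReal.ofReal_mul hx]
    · rw [ENNReal.ofReal_of_nonpos hx.le, zero_mul]; exact zero_le
  calc ENNReal.ofReal ((1 + (D:ℝ)) ^ α *
        ∫ u in Set.Icc (((σ:ℕ) - 1 : ℝ) / lam ^ 2) (((σ:ℕ) : ℝ) / lam ^ 2),
          ∫ v in Set.Icc ((((σ+D:ℕ)) - 1 : ℝ) / lam ^ 2) ((((σ+D:ℕ)) : ℝ) / lam ^ 2),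
            lam ^ 2 * C * ‖h (v - u)‖)
      = ENNReal.ofReal ((1 + (D:ℝ)) ^ α) * ENNReal.ofReal
          (∫ u in Set.Icc (((σ:ℕ) - 1 : ℝ) / lam ^ 2) (((σ:ℕ) : ℝ) / lam ^ 2),
            ∫ v in Set.Icc ((((σ+D:ℕ)) - 1 : ℝ) / lam ^ 2) ((((σ+D:ℕ)) : ℝ) / lam ^ 2),
              lam ^ 2 * C * ‖h (v - u)‖) := ENNReal.ofReal_mul hrpnn
    _ ≤ ENNReal.ofReal ((1 + (D:ℝ)) ^ α) * (ENNReal.ofReal (lam ^ 2 * C) *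
          ∫⁻ s, ENNReal.ofReal (‖h s‖) *
            volume (Set.Icc (((σ:ℕ) - 1 : ℝ) / lam ^ 2) (((σ:ℕ) : ℝ) / lam ^ 2) ∩
              Set.Icc ((((σ+D:ℕ)) - 1 : ℝ) / lam ^ 2 - s) ((((σ+D:ℕ)) : ℝ) / lam ^ 2 - s))) :=
        mul_le_mul_right (fubini_bound h hm (lam ^ 2 * C) hL2C _ _ _ _) _
    _ = ∫⁻ s, ENNReal.ofReal ((1 + (D:ℝ)) ^ α) * (ENNReal.ofReal (lam ^ 2 * C) *
          (ENNReal.ofReal (‖h s‖) *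
            volume (Set.Icc (((σ:ℕ) - 1 : ℝ) / lam ^ 2) (((σ:ℕ) : ℝ) / lam ^ 2) ∩
              Set.Icc ((((σ+D:ℕ)) - 1 : ℝ) / lam ^ 2 - s) ((((σ+D:ℕ)) : ℝ) / lam ^ 2 - s)))) := by
        rw [← lintegral_const_mul' (ENNReal.ofReal (lam ^ 2 * C)) _ ENNReal.ofReal_ne_top,
          ← lintegral_const_mul' (ENNReal.ofReal ((1 + (D:ℝ)) ^ α)) _ ENNReal.ofReal_ne_top]
    _ ≤ ∫⁻ s, ENNReal.ofReal ((2 ^ (α + 1) + 3 ^ α) * C * lam ^ (2 * min α 1)) *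
          (ENNReal.ofReal ((1 + s) ^ α * ‖h s‖) *
            (Set.Icc (((D:ℝ) - 1) / lam ^ 2) (((D:ℝ) + 1) / lam ^ 2)).indicator 1 s) := by
        refine lintegral_mono fun s => ?_
        have hpb := pointwise_bound (C := C) hα hC hl hl1 σ D hD1 s
        calc ENNReal.ofReal ((1 + (D:ℝ)) ^ α) * (ENNReal.ofReal (lam ^ 2 * C) *
              (ENNReal.ofReal (‖h s‖) * volume _))
            = ENNReal.ofReal (‖h s‖) *
                (ENNReal.ofReal ((1 + (D:ℝ)) ^ α) * ENNReal.ofReal (lam ^ 2 * C) *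
                  volume _) := by ring
          _ ≤ ENNReal.ofReal (‖h s‖) *
                (ENNReal.ofReal ((2 ^ (α + 1) + 3 ^ α) * C * lam ^ (2 * min α 1)) *
                  (ENNReal.ofReal ((1 + s) ^ α) *
                    (Set.Icc (((D:ℝ) - 1) / lam ^ 2) (((D:ℝ) + 1) / lam ^ 2)).indicator 1 s)) :=
              mul_le_mul_right hpb _
          _ = ENNReal.ofReal ((2 ^ (α + 1) + 3 ^ α) * C * lam ^ (2 * min α 1)) *
                ((ENNReal.ofReal ((1 + s) ^ α) * ENNReal.ofReal (‖h s‖)) *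
                  (Set.Icc (((D:ℝ) - 1) / lam ^ 2) (((D:ℝ) + 1) / lam ^ 2)).indicator 1 s) := by
              ring
          _ ≤ ENNReal.ofReal ((2 ^ (α + 1) + 3 ^ α) * C * lam ^ (2 * min α 1)) *
                (ENNReal.ofReal ((1 + s) ^ α * ‖h s‖) *
                  (Set.Icc (((D:ℝ) - 1) / lam ^ 2) (((D:ℝ) + 1) / lam ^ 2)).indicator 1 s) :=
              mul_le_mul_right (mul_le_mul_left (hfg s) _) _
    _ = ENNReal.ofReal ((2 ^ (α + 1) + 3 ^ α) * C * lam ^ (2 * min α 1)) *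
          ∫⁻ s, ENNReal.ofReal ((1 + s) ^ α * ‖h s‖) *
            (Set.Icc (((D:ℝ) - 1) / lam ^ 2) (((D:ℝ) + 1) / lam ^ 2)).indicator 1 s :=
        lintegral_const_mul' _ _ ENNReal.ofReal_ne_top

/-- Summability of the distance-weighted edge factors: if
`∫₀^∞ (1+s)^α |h(s)| ds ≤ C₁`, then with
`ê_α(τ,τ') = (1+|τ'−τ|)^α ê(τ,τ')` one has `∑_{τ'≠τ} ê_α(τ,τ') ≤ C₂ λ^{2 min(α,1)}`
for every `τ`, where `C₂` depends only on `C`, `C₁` and `α`. -/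
theorem edge_factor_sum (α C C₁ : ℝ) (hα : 0 < α) (hC : 0 ≤ C) (hC₁ : 0 ≤ C₁) :
    ∃ C₂ : ℝ, ∀ (h : ℝ → ℂ) (lam : ℝ), 0 < lam → lam ≤ 1 →
      Measurable h →
      IntegrableOn (fun s => (1 + s) ^ α * ‖h s‖) (Set.Ioi 0) →
      (∫ s in Set.Ioi (0:ℝ), (1 + s) ^ α * ‖h s‖) ≤ C₁ →
      ∀ τ : ℕ, 1 ≤ τ →
        (∑' τ' : ℕ, if 1 ≤ τ' ∧ τ' ≠ τ
            then ENNReal.ofReal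
              ((1 + ((max τ τ' - min τ τ' : ℕ) : ℝ)) ^ α * ehat C lam h τ τ')
            else 0)
          ≤ ENNReal.ofReal (C₂ * lam ^ (2 * min α 1)) := by
  refine ⟨6 * ((2 ^ (α + 1) + 3 ^ α) * C * C₁), ?_⟩
  intro h lam hl hl1 hm hint hintle τ hτ
  have hL2 : (0:ℝ) < lam ^ 2 := by positivity
  set g : ℝ → ℝ≥0∞ := fun s => ENNReal.ofReal ((1 + s) ^ α * ‖h s‖) with hg
  have hgm : Measurable g := by
    have h1 : Measurable fun s : ℝ => (1 + s) ^ α := by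
      have : Measurable fun s : ℝ => 1 + s := measurable_const.add measurable_id
      fun_prop
    exact ENNReal.measurable_ofReal.comp (h1.mul (continuous_norm.measurable.comp hm))
  set KC : ℝ≥0∞ := ENNReal.ofReal ((2 ^ (α + 1) + 3 ^ α) * C * lam ^ (2 * min α 1)) with hKC
  set I : ℕ → Set ℝ := fun D =>
    Set.Icc (((D:ℝ) - 1) / lam ^ 2) (((D:ℝ) + 1) / lam ^ 2) with hI
  set ψ : ℕ → ℝ → ℝ≥0∞ := fun τ' s =>
    if 1 ≤ τ' ∧ τ' ≠ τ then g s * (I (max τ τ' - min τ τ')).indicator 1 s else 0 with hψ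
  have hψm : ∀ τ', Measurable (ψ τ') := by
    intro τ'
    by_cases hcond : 1 ≤ τ' ∧ τ' ≠ τ
    · simp only [hψ, if_pos hcond]
      exact hgm.mul (measurable_const.indicator measurableSet_Icc)
    · simp only [hψ, if_neg hcond]
      exact measurable_const
  -- step 1 : termwise bound
  have step1 : (∑' τ' : ℕ, if 1 ≤ τ' ∧ τ' ≠ τ
      then ENNReal.ofReal
        ((1 + ((max τ τ' - min τ τ' : ℕ) : ℝ)) ^ α * ehat C lam h τ τ')
      else 0) ≤ KC * ∑' τ' : ℕ, ∫⁻ s, ψ τ' s := by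
    rw [← ENNReal.tsum_mul_left]
    refine ENNReal.tsum_le_tsum fun τ' => ?_
    by_cases hcond : 1 ≤ τ' ∧ τ' ≠ τ
    · rw [if_pos hcond]
      refine le_trans (single_bound hα hC hl hl1 h hm τ τ' hτ hcond.1 hcond.2) ?_
      refine mul_le_mul_right (le_of_eq (lintegral_congr fun s => ?_)) _
      rw [hψ]
      simp only [if_pos hcond, hI, hg]
    · rw [if_neg hcond]
      exact zero_le
  -- step 2 : pointwise bound on the sum of indicators
  have key2 : ∀ s, (∑' τ' : ℕ, ψ τ' s) ≤ 6 * (Set.Ici (0:ℝ)).indicator g s := by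
    intro s
    set m := Nat.floor (lam ^ 2 * s) with hmdef
    set Fs : Finset ℕ := ((Finset.Icc (m-1) (m+1)).image fun d => τ - d) ∪
      ((Finset.Icc (m-1) (m+1)).image fun d => τ + d) with hFs
    set χ : ℕ → ℝ≥0∞ := fun τ' =>
      if (1 ≤ τ' ∧ τ' ≠ τ) ∧ s ∈ I (max τ τ' - min τ τ') then 1 else 0 with hχ
    have hψχ : ∀ τ', ψ τ' s ≤ (Set.Ici (0:ℝ)).indicator g s * χ τ' := by
      intro τ'
      by_cases hcond : 1 ≤ τ' ∧ τ' ≠ τ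
      · by_cases hmem : s ∈ I (max τ τ' - min τ τ')
        · have hD1 : 1 ≤ max τ τ' - min τ τ' := by omega
          have hcast : (1:ℝ) ≤ ((max τ τ' - min τ τ' : ℕ):ℝ) := by exact_mod_cast hD1
          have hmem' := hmem
          simp only [hI, Set.mem_Icc] at hmem'
          have hs0 : (0:ℝ) ≤ s :=
            le_trans (div_nonneg (by linarith) hL2.le) hmem'.1
          rw [hψ, hχ]
          simp only [if_pos hcond, if_pos (And.intro hcond hmem)]
          rw [Set.indicator_of_mem hmem, Set.indicator_of_mem (Set.mem_Ici.mpr hs0)]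
          simp
        · rw [hψ, hχ]
          simp only [if_pos hcond, if_neg (fun hh => hmem (And.right hh))]
          rw [Set.indicator_of_notMem hmem]
          simp
      · rw [hψ, hχ]
        simp only [if_neg hcond, if_neg (fun hh => hcond (And.left hh))]
        simp
    have hχsum : (∑' τ', χ τ') ≤ 6 := by
      have hvanish : ∀ b ∉ Fs, χ b = 0 := by
        intro b hb
        simp only [hχ]
        rw [if_neg]
        rintro ⟨⟨hb1, hbne⟩, hmem⟩
        apply hb
        simp only [hI, Set.mem_Icc] at hmem
        set D := max τ b - min τ b with hD
        have hD1 : 1 ≤ D := by omega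
        have hcD : (1:ℝ) ≤ (D:ℝ) := by exact_mod_cast hD1
        have hs0 : (0:ℝ) ≤ s := le_trans (div_nonneg (by linarith) hL2.le) hmem.1
        have h1 : (D:ℝ) - 1 ≤ lam ^ 2 * s := by
          have := (div_le_iff₀ hL2).mp hmem.1
          linarith
        have h2 : lam ^ 2 * s ≤ (D:ℝ) + 1 := by
          have := (le_div_iff₀ hL2).mp hmem.2
          linarith
        have hm1 : (m:ℝ) ≤ lam ^ 2 * s := Nat.floor_le (by positivity)
        have hm2 : lam ^ 2 * s < (m:ℝ) + 1 := Nat.lt_floor_add_one _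
        have hDle : D ≤ m + 1 := by
          have hlt : (D:ℝ) < (m:ℝ) + 2 := by linarith
          have : D < m + 2 := by exact_mod_cast hlt
          omega
        have hDge : m ≤ D + 1 := by
          have : (m:ℝ) ≤ (D:ℝ) + 1 := by linarith
          exact_mod_cast this
        have hDmem : D ∈ Finset.Icc (m-1) (m+1) := Finset.mem_Icc.mpr ⟨by omega, hDle⟩
        rcases Nat.le_total b τ with hbτ | hbτ
        · refine Finset.mem_union_left _ (Finset.mem_image.mpr ⟨D, hDmem, ?_⟩)
          omega
        · refine Finset.mem_union_right _ (Finset.mem_image.mpr ⟨D, hDmem, ?_⟩)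
          omega
      rw [tsum_eq_sum hvanish]
      calc ∑ b ∈ Fs, χ b ≤ ∑ b ∈ Fs, 1 :=
            Finset.sum_le_sum fun b _ => by simp only [hχ]; split <;> simp
        _ = (Fs.card : ℝ≥0∞) := by simp
        _ ≤ 6 := by
            have hcard : Fs.card ≤ 6 := by
              refine le_trans (Finset.card_union_le _ _) ?_
              have h1 := Finset.card_image_le (s := Finset.Icc (m-1) (m+1))
                (f := fun d => τ - d)
              have h2 := Finset.card_image_le (s := Finset.Icc (m-1) (m+1))
                (f := fun d => τ + d)
              have h3 : (Finset.Icc (m-1) (m+1)).card ≤ 3 := by rw [Nat.card_Icc]; omega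
              omega
            exact_mod_cast hcard
    calc (∑' τ', ψ τ' s) ≤ ∑' τ', (Set.Ici (0:ℝ)).indicator g s * χ τ' :=
          ENNReal.tsum_le_tsum hψχ
      _ = (Set.Ici (0:ℝ)).indicator g s * ∑' τ', χ τ' := ENNReal.tsum_mul_left
      _ ≤ (Set.Ici (0:ℝ)).indicator g s * 6 := mul_le_mul_right hχsum _
      _ = 6 * (Set.Ici (0:ℝ)).indicator g s := mul_comm _ _
  -- step 3 : the integral bound
  have hIoi : (∫⁻ s in Set.Ioi (0:ℝ), g s) ≤ ENNReal.ofReal C₁ := by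
    have hnn : 0 ≤ᵐ[volume.restrict (Set.Ioi (0:ℝ))]
        fun s => (1 + s) ^ α * ‖h s‖ := by
      refine (ae_restrict_iff' measurableSet_Ioi).mpr (Filter.Eventually.of_forall
        fun s hs => ?_)
      have hs' : 0 < s := Set.mem_Ioi.mp hs
      exact mul_nonneg (Real.rpow_nonneg (by linarith) _) (norm_nonneg _)
    rw [hg]
    rw [← ofReal_integral_eq_lintegral_ofReal hint hnn]
    exact ENNReal.ofReal_le_ofReal hintle
  have step3 : (∑' τ' : ℕ, ∫⁻ s, ψ τ' s) ≤ 6 * ENNReal.ofReal C₁ := by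
    calc (∑' τ' : ℕ, ∫⁻ s, ψ τ' s) = ∫⁻ s, ∑' τ', ψ τ' s :=
          (lintegral_tsum fun τ' => (hψm τ').aemeasurable).symm
      _ ≤ ∫⁻ s, 6 * (Set.Ici (0:ℝ)).indicator g s := lintegral_mono key2
      _ = 6 * ∫⁻ s, (Set.Ici (0:ℝ)).indicator g s :=
          lintegral_const_mul' _ _ (by norm_num)
      _ = 6 * ∫⁻ s in Set.Ici (0:ℝ), g s := by rw [lintegral_indicator measurableSet_Ici]
      _ = 6 * ∫⁻ s in Set.Ioi (0:ℝ), g s := by rw [restrict_Ioi_eq_restrict_Ici]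
      _ ≤ 6 * ENNReal.ofReal C₁ := mul_le_mul_right hIoi _
  refine le_trans step1 (le_trans (mul_le_mul_right step3 _) ?_)
  have hKnn : (0:ℝ) ≤ (2 ^ (α + 1) + 3 ^ α) * C * lam ^ (2 * min α 1) :=
    mul_nonneg (mul_nonneg (by positivity) hC) (Real.rpow_nonneg hl.le _)
  rw [hKC]
  rw [show ((6:ℝ≥0∞)) = ENNReal.ofReal (6:ℝ) from (ENNReal.ofReal_ofNat 6).symm]
  rw [← ENNReal.ofReal_mul (by norm_num : (0:ℝ) ≤ 6)]
  rw [← ENNReal.ofReal_mul hKnn]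
  exact ENNReal.ofReal_le_ofReal (le_of_eq (by ring))
end
end
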